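/- arXiv:2406.10656 — 5 statements merged into one kernel-verified Lean document; each statement's English description precedes it below -/
import Mathlib

section
/- Let (ψ_n) be a sequence of nonnegative convex functions ℝ^d → ℝ and fix x ∈ ℝ^d. Define I^b(x) as the set of y ∈ ℝ^d such that lim_{ε↓0} sup_n sup{ψ̄_n(y) : ψ̄_n = ψ_n + aff, ψ̄_n ≥ 0, ψ̄_n(x) < ε} < ∞, and I^B(x) = ri I^b(x). Then x ∈ I^B(x), i.e. x lies in the relative interior of I^b(x). -/
open MeasureTheory Set

noncomputable section

variable {d : ℕ}

/-- The representatives of `ψ_n` that are nonnegative and take a value `< ε` at `x`: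
all functions of the form `ψ_n + aff` with `aff` affine, `ψ_n + aff ≥ 0` and
`(ψ_n + aff)(x) < ε`. -/
def reps (Ψ : ℕ → EuclideanSpace ℝ (Fin d) → ℝ) (n : ℕ) (x : EuclideanSpace ℝ (Fin d))
    (ε : ℝ) : Set (EuclideanSpace ℝ (Fin d) → ℝ) :=
  {g | ∃ (a : EuclideanSpace ℝ (Fin d)) (b : ℝ),
    (∀ y, g y = Ψ n y + (inner ℝ a y + b)) ∧ (∀ y, 0 ≤ g y) ∧ g x < ε}

/-- `I^b(x)`: the set of `y` such that
`lim_{ε↓0} sup_n sup_{ψ̄_n ∈ [ψ_n]^{x,ε}} ψ̄_n(y) < ∞`.  Since the inner ℝ supremum is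
nonincreasing as `ε ↓ 0`, finiteness of the limit is equivalent to finiteness of the
supremum for some `ε > 0`. -/
def Ib (Ψ : ℕ → EuclideanSpace ℝ (Fin d) → ℝ) (x : EuclideanSpace ℝ (Fin d)) :
    Set (EuclideanSpace ℝ (Fin d)) :=
  {y | ∃ ε > (0 : ℝ), ∃ M : ℝ, ∀ n, ∀ g ∈ reps Ψ n x ε, g y ≤ M}

/-- `I^B(x)`: the relative interior of `I^b(x)`. -/
def IB (Ψ : ℕ → EuclideanSpace ℝ (Fin d) → ℝ) (x : EuclideanSpace ℝ (Fin d)) :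
    Set (EuclideanSpace ℝ (Fin d)) :=
  intrinsicInterior ℝ (Ib Ψ x)


lemma exists_subgradient {f : EuclideanSpace ℝ (Fin d) → ℝ}
    (hf : ConvexOn ℝ Set.univ f) (z : EuclideanSpace ℝ (Fin d)) :
    ∃ p : EuclideanSpace ℝ (Fin d), ∀ u, f z + (inner ℝ p (u - z) : ℝ) ≤ f u := by
  have hcont : Continuous f := hf.locallyLipschitz.continuous
  set T : Set (EuclideanSpace ℝ (Fin d) × ℝ) := {q | f q.1 < q.2} with hT
  have hTopen : IsOpen T := isOpen_lt (hcont.comp continuous_fst) continuous_snd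
  have hTconv : Convex ℝ T := by
    rintro ⟨u₁, r₁⟩ h₁ ⟨u₂, r₂⟩ h₂ α β hα hβ hab
    simp only [hT, mem_setOf_eq] at h₁ h₂ ⊢
    have := hf.2 (mem_univ u₁) (mem_univ u₂) hα hβ hab
    simp only [Prod.smul_mk, Prod.mk_add_mk, smul_eq_mul] at this ⊢
    have h1 : α * f u₁ ≤ α * r₁ := mul_le_mul_of_nonneg_left h₁.le hα
    have h2 : β * f u₂ ≤ β * r₂ := mul_le_mul_of_nonneg_left h₂.le hβ
    rcases lt_or_eq_of_le hα with hα' | hα'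
    · have : α * f u₁ < α * r₁ := by exact (mul_lt_mul_iff_right₀ hα').mpr h₁
      calc f (α • u₁ + β • u₂) ≤ α * f u₁ + β * f u₂ := by
            simpa using hf.2 (mem_univ u₁) (mem_univ u₂) hα hβ hab
        _ < α * r₁ + β * r₂ := by linarith
    · have hβ1 : β = 1 := by linarith
      have : β * f u₂ < β * r₂ := by rw [hβ1]; simpa using h₂
      calc f (α • u₁ + β • u₂) ≤ α * f u₁ + β * f u₂ := by
            simpa using hf.2 (mem_univ u₁) (mem_univ u₂) hα hβ hab
        _ < α * r₁ + β * r₂ := by linarith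
  have hzT : ((z, f z) : _ × ℝ) ∉ T := by simp [hT]
  obtain ⟨L, hL⟩ := geometric_hahn_banach_point_open hTconv hTopen hzT
  set c : ℝ := L (0, 1) with hc
  have hkey : ∀ (u : EuclideanSpace ℝ (Fin d)) (r : ℝ), L (u, r) = L (u, 0) + r * c := by
    intro u r
    have h : ((u, r) : _ × ℝ) = (u, (0:ℝ)) + r • ((0 : EuclideanSpace ℝ (Fin d)), (1:ℝ)) := by
      simp [Prod.ext_iff]
    rw [h, map_add, _root_.map_smul, smul_eq_mul, hc]
  have hcpos : 0 < c := by
    have h := hL (z, f z + 1) (by simp [hT])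
    rw [hkey z (f z + 1), hkey z (f z)] at h
    linarith
  have hmain : ∀ u, L (z, 0) + f z * c ≤ L (u, 0) + f u * c := by
    intro u
    by_contra hcon
    push_neg at hcon
    set δ := (L (z, 0) + f z * c - (L (u, 0) + f u * c)) / (2 * c) with hδ
    have hδpos : 0 < δ := by
      apply div_pos; linarith; linarith
    have h := hL (u, f u + δ) (by simp [hT]; linarith)
    rw [hkey u (f u + δ), hkey z (f z)] at h
    have hδc : δ * c = (L (z, 0) + f z * c - (L (u, 0) + f u * c)) / 2 := by
      rw [hδ]; field_simp
    nlinarith [h, hδc]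
  set q : EuclideanSpace ℝ (Fin d) :=
    (InnerProductSpace.toDual ℝ _).symm (L.comp (ContinuousLinearMap.inl ℝ _ ℝ)) with hq
  have hqv : ∀ v : EuclideanSpace ℝ (Fin d), (inner ℝ q v : ℝ) = L (v, 0) := by
    intro v
    rw [hq, InnerProductSpace.toDual_symm_apply]
    simp
  refine ⟨(-c⁻¹) • q, fun u => ?_⟩
  have hinner : (inner ℝ ((-c⁻¹) • q) (u - z) : ℝ) = (-c⁻¹) * (L (u, 0) - L (z, 0)) := by
    rw [real_inner_smul_left, hqv (u - z)]
    congr 1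
    have : ((u - z, (0:ℝ)) : _ × ℝ) = (u, (0:ℝ)) - (z, (0:ℝ)) := by simp [Prod.ext_iff]
    rw [this, map_sub]
  rw [hinner]
  have h := hmain u
  have hcinv : c⁻¹ * c = 1 := inv_mul_cancel₀ hcpos.ne'
  by_contra hcon
  push_neg at hcon
  have h2 := mul_lt_mul_of_pos_right hcon hcpos
  have h3 : (f z + -c⁻¹ * (L (u, 0) - L (z, 0))) * c = f z * c - (L (u, 0) - L (z, 0)) := by
    field_simp
    ring
  rw [h3] at h2
  linarith

lemma mem_intrinsicInterior_of_prolong {C : Set (EuclideanSpace ℝ (Fin d))}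
    {x : EuclideanSpace ℝ (Fin d)} (hC : Convex ℝ C) (hx : x ∈ C)
    (hp : ∀ y ∈ C, ∃ t : ℝ, 0 < t ∧ x + t • (x - y) ∈ C) :
    x ∈ intrinsicInterior ℝ C := by
  set W := (affineSpan ℝ C).direction with hW
  set D : Set W := {v | x + (v : EuclideanSpace ℝ (Fin d)) ∈ C} with hD
  have hxspan : x ∈ affineSpan ℝ C := subset_affineSpan ℝ C hx
  have hmemW : ∀ c ∈ C, c - x ∈ W := fun c hc =>
    AffineSubspace.vsub_mem_direction (subset_affineSpan ℝ C hc) hxspan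
  have h0D : (0 : W) ∈ D := by simp [hD, hx]
  have hDconv : Convex ℝ D := by
    intro v₁ h₁ v₂ h₂ α β hα hβ hab
    simp only [hD, mem_setOf_eq] at h₁ h₂ ⊢
    have : x + ((α • v₁ + β • v₂ : W) : EuclideanSpace ℝ (Fin d))
        = α • (x + (v₁ : EuclideanSpace ℝ (Fin d))) + β • (x + (v₂ : EuclideanSpace ℝ (Fin d))) := by
      push_cast
      match_scalars <;> simp <;> linarith
    rw [this]
    exact hC h₁ h₂ hα hβ hab
  -- span of D is everything
  have hspanD : Submodule.span ℝ D = (⊤ : Submodule ℝ W) := by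
    have himg : (W.subtype : W → EuclideanSpace ℝ (Fin d)) '' D = (· -ᵥ x) '' C := by
      ext v
      constructor
      · rintro ⟨w, hw, rfl⟩
        exact ⟨x + (w : EuclideanSpace ℝ (Fin d)), hw, by simp⟩
      · rintro ⟨c, hc, rfl⟩
        exact ⟨⟨c - x, hmemW c hc⟩, by simp [hD, hc], rfl⟩
    have hmap : Submodule.map W.subtype (Submodule.span ℝ D) = W := by
      rw [Submodule.map_span, himg, ← vectorSpan_eq_span_vsub_set_right ℝ hx,
        ← direction_affineSpan]
    have htop : Submodule.map W.subtype (⊤ : Submodule ℝ W) = W := by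
      simp [Submodule.map_subtype_top]
    exact Submodule.map_injective_of_injective W.injective_subtype (hmap.trans htop.symm)
  have hDspan : affineSpan ℝ D = ⊤ := by
    rw [AffineSubspace.affineSpan_eq_top_iff_vectorSpan_eq_top_of_nonempty ℝ _ _ ⟨0, h0D⟩,
      vectorSpan_eq_span_vsub_set_right ℝ h0D]
    simpa using hspanD
  obtain ⟨w₀, hw₀⟩ := (hDconv.interior_nonempty_iff_affineSpan_eq_top).2 hDspan
  have hw₀D : w₀ ∈ D := interior_subset hw₀
  obtain ⟨t, ht, hzt⟩ := hp (x + (w₀ : EuclideanSpace ℝ (Fin d))) hw₀D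
  have hneg : (-t) • w₀ ∈ D := by
    simp only [hD, mem_setOf_eq]
    have : x + (((-t) • w₀ : W) : EuclideanSpace ℝ (Fin d)) = x + t • (x - (x + w₀)) := by
      push_cast
      match_scalars <;> simp <;> ring
    rw [this]
    exact hzt
  have h0int : (0 : W) ∈ interior D := by
    have hcombo := hDconv.combo_interior_self_mem_interior hw₀ hneg
      (a := t / (1 + t)) (b := 1 / (1 + t))
      (by positivity) (by positivity) (by field_simp; ring)
    have : (t / (1 + t)) • w₀ + (1 / (1 + t)) • ((-t) • w₀) = (0 : W) := by
      rw [smul_smul, ← add_smul]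
      have h1t : (1 : ℝ) + t ≠ 0 := by positivity
      have : t / (1 + t) + 1 / (1 + t) * (-t) = 0 := by field_simp; ring
      rw [this, zero_smul]
    rwa [this] at hcombo
  -- transfer back
  set φ : affineSpan ℝ C → W := fun y =>
    ⟨(y : EuclideanSpace ℝ (Fin d)) - x,
      AffineSubspace.vsub_mem_direction y.2 hxspan⟩ with hφ
  have hφcont : Continuous φ := by
    apply Continuous.subtype_mk
    exact continuous_subtype_val.sub continuous_const
  set x' : affineSpan ℝ C := ⟨x, hxspan⟩ with hx'
  have hφx : φ x' = 0 := by
    simp [hφ, hx']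
  have hU : x' ∈ interior ((↑) ⁻¹' C : Set (affineSpan ℝ C)) := by
    have hsub : φ ⁻¹' interior D ⊆ ((↑) ⁻¹' C : Set (affineSpan ℝ C)) := by
      intro y hy
      have : φ y ∈ D := interior_subset hy
      simp only [hD, mem_setOf_eq, hφ] at this
      simpa using this
    have hopen : IsOpen (φ ⁻¹' interior D) := hφcont.isOpen_preimage _ isOpen_interior
    have hxmem : x' ∈ φ ⁻¹' interior D := by simp [mem_preimage, hφx, h0int]
    exact interior_maximal hsub hopen hxmem
  exact mem_intrinsicInterior.2 ⟨x', hU, rfl⟩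

lemma reps_convexOn {Ψ : ℕ → EuclideanSpace ℝ (Fin d) → ℝ} {n : ℕ}
    (hconv : ConvexOn ℝ Set.univ (Ψ n)) {g : EuclideanSpace ℝ (Fin d) → ℝ}
    {a : EuclideanSpace ℝ (Fin d)} {b : ℝ}
    (hdef : ∀ y, g y = Ψ n y + ((inner ℝ a y : ℝ) + b)) :
    ConvexOn ℝ Set.univ g := by
  have hg : g = fun y => Ψ n y + ((inner ℝ a y : ℝ) + b) := funext hdef
  rw [hg]
  refine hconv.add ⟨convex_univ, fun u _ v _ α β hα hβ hab => le_of_eq ?_⟩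
  simp only [inner_add_right, real_inner_smul_right, smul_eq_mul]
  linear_combination (-b) * hab

lemma self_mem_Ib (Ψ : ℕ → EuclideanSpace ℝ (Fin d) → ℝ) (x : EuclideanSpace ℝ (Fin d)) :
    x ∈ Ib Ψ x :=
  ⟨1, one_pos, 1, fun _ _ hg => by obtain ⟨a, b, _, _, hx⟩ := hg; exact hx.le⟩

lemma convex_Ib (Ψ : ℕ → EuclideanSpace ℝ (Fin d) → ℝ)
    (hconv : ∀ n, ConvexOn ℝ Set.univ (Ψ n)) (x : EuclideanSpace ℝ (Fin d)) :
    Convex ℝ (Ib Ψ x) := by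
  rintro y₁ ⟨ε₁, hε₁, M₁, hM₁⟩ y₂ ⟨ε₂, hε₂, M₂, hM₂⟩ α β hα hβ hab
  refine ⟨min ε₁ ε₂, lt_min hε₁ hε₂, max M₁ M₂, fun n g hg => ?_⟩
  obtain ⟨a, b, hdef, hpos', hx'⟩ := hg
  have b₁ := hM₁ n g ⟨a, b, hdef, hpos', lt_of_lt_of_le hx' (min_le_left _ _)⟩
  have b₂ := hM₂ n g ⟨a, b, hdef, hpos', lt_of_lt_of_le hx' (min_le_right _ _)⟩
  have hcg : ConvexOn ℝ Set.univ g := reps_convexOn (hconv n) hdef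
  have := hcg.2 (mem_univ y₁) (mem_univ y₂) hα hβ hab
  simp only [smul_eq_mul] at this
  have e1 : α * g y₁ ≤ α * max M₁ M₂ :=
    mul_le_mul_of_nonneg_left (b₁.trans (le_max_left _ _)) hα
  have e2 : β * g y₂ ≤ β * max M₁ M₂ :=
    mul_le_mul_of_nonneg_left (b₂.trans (le_max_right _ _)) hβ
  have e3 : α * max M₁ M₂ + β * max M₁ M₂ = max M₁ M₂ := by rw [← add_mul, hab, one_mul]
  linarith

lemma prolong_Ib (Ψ : ℕ → EuclideanSpace ℝ (Fin d) → ℝ)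
    (hconv : ∀ n, ConvexOn ℝ Set.univ (Ψ n)) (hpos : ∀ n y, 0 ≤ Ψ n y)
    (x : EuclideanSpace ℝ (Fin d)) :
    ∀ y ∈ Ib Ψ x, ∃ t : ℝ, 0 < t ∧ x + t • (x - y) ∈ Ib Ψ x := by
  rintro y ⟨ε₀, hε₀, M, hM⟩
  set M₁ : ℝ := max M 0 with hM₁
  have hMM₁ : M ≤ M₁ := le_max_left _ _
  have hM₁nn : 0 ≤ M₁ := le_max_right _ _
  clear_value M₁
  set ε' : ℝ := ε₀ / 2 with hε'
  have hε'pos : 0 < ε' := by positivity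
  have hε2 : ε' + ε' = ε₀ := by rw [hε']; ring
  have hε'lt : ε' < ε₀ := by linarith
  clear_value ε'
  set t : ℝ := ε' / (2 * (M₁ + 1)) with ht
  have htpos : 0 < t := by positivity
  have hMt : M₁ * t ≤ ε' / 2 := by
    have hD : (0:ℝ) < 2 * (M₁ + 1) := by positivity
    rw [ht, mul_div_assoc', div_le_div_iff₀ hD two_pos]
    nlinarith [hε'pos.le, hM₁nn]
  clear_value t
  refine ⟨t, htpos, ?_⟩
  set z := x + t • (x - y) with hz
  clear_value z
  refine ⟨ε', hε'pos, ε' + t * (2 * ε' + 4 * M₁), fun n g hg => ?_⟩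
  obtain ⟨a, b, hgdef, hgpos, hgx⟩ := hg
  have hgy : g y ≤ M₁ :=
    le_trans (hM n g ⟨a, b, hgdef, hgpos, by linarith⟩) hMM₁
  have hgconv : ConvexOn ℝ Set.univ g := reps_convexOn (hconv n) hgdef
  obtain ⟨p, hp⟩ := exists_subgradient hgconv z
  set Q : ℝ := - (inner ℝ p (y - x) : ℝ) with hQ
  have hxz : x - z = t • (y - x) := by rw [hz]; module
  have hyz : y - z = (1 + t) • (y - x) := by rw [hz]; module
  have hgz : g z ≤ g x + t * Q := by
    have hx' := hp x
    rw [hxz, real_inner_smul_right] at hx'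
    rw [hQ]
    linarith
  set h : EuclideanSpace ℝ (Fin d) → ℝ := fun u => g u - g z - (inner ℝ p (u - z) : ℝ) with hh
  have hh0 : ∀ u, 0 ≤ h u := fun u => by have := hp u; rw [hh]; simp only; linarith
  have hhx : h x = g x - g z + t * Q := by
    rw [hh]; simp only
    rw [hxz, real_inner_smul_right, hQ]; ring
  have hhy : h y = g y - g z + (1 + t) * Q := by
    rw [hh]; simp only
    rw [hyz, real_inner_smul_right, hQ]; ring
  clear_value h
  clear_value Q
  have hhxnn : 0 ≤ h x := hh0 x
  set θ : ℝ := ε' / (h x + ε') with hθ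
  have hden : 0 < h x + ε' := by linarith
  have hθpos : 0 < θ := by positivity
  have hθle : θ ≤ 1 := by rw [hθ, div_le_one hden]; linarith
  have hθε : θ * (h x + ε') = ε' := by rw [hθ]; field_simp
  clear_value θ
  -- the tilted combination lies in reps Ψ n x ε₀
  have key : (1 - θ) * g y + θ * h y ≤ M := by
    have hmem : (fun u => (1 - θ) * g u + θ * h u) ∈ reps Ψ n x ε₀ := by
      refine ⟨a - θ • p, b + θ * ((inner ℝ p z : ℝ) - g z), ?_, ?_, ?_⟩
      · intro u
        show (1 - θ) * g u + θ * h u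
            = Ψ n u + ((inner ℝ (a - θ • p) u : ℝ) + (b + θ * ((inner ℝ p z : ℝ) - g z)))
        have hhu : h u = g u - g z - (inner ℝ p (u - z) : ℝ) := by rw [hh]
        rw [hhu, hgdef u, inner_sub_left, real_inner_smul_left, inner_sub_right]
        ring
      · intro u
        show 0 ≤ (1 - θ) * g u + θ * h u
        have e1 : 0 ≤ (1 - θ) * g u := mul_nonneg (by linarith) (hgpos u)
        have e2 : 0 ≤ θ * h u := mul_nonneg hθpos.le (hh0 u)
        linarith
      · show (1 - θ) * g x + θ * h x < ε₀
        have hθhx : θ * h x < ε' := by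
          linarith [hθε, mul_pos hθpos hε'pos]
        have e1 : (1 - θ) * g x ≤ g x := by
          linarith [mul_nonneg hθpos.le (hgpos x)]
        linarith
    exact hM n _ hmem
  have hθhy : θ * h y ≤ M₁ := by
    have e0 : 0 ≤ (1 - θ) * g y := mul_nonneg (by linarith) (hgpos y)
    linarith
  have hεhy : ε' * h y ≤ M₁ * (h x + ε') := by
    have h2 : θ * h y * (h x + ε') ≤ M₁ * (h x + ε') :=
      mul_le_mul_of_nonneg_right hθhy hden.le
    calc ε' * h y = θ * (h x + ε') * h y := by rw [hθε]
      _ = θ * h y * (h x + ε') := by ring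
      _ ≤ M₁ * (h x + ε') := h2
  have hgznn : 0 ≤ g z := hgpos z
  have hyQ : Q - ε' ≤ h y := by
    rw [hhy]; linarith [hgpos y, hgz]
  have hxQ : h x ≤ ε' + t * Q := by rw [hhx]; linarith [hgpos z]
  rcases le_or_gt Q 0 with hQle | hQpos
  · have h1 : g z ≤ ε' := by
      have := mul_nonpos_of_nonneg_of_nonpos htpos.le hQle
      linarith
    have h2 : 0 ≤ t * (2 * ε' + 4 * M₁) :=
      mul_nonneg htpos.le (by linarith)
    linarith
  · have hchain : ε' * (Q - ε') ≤ M₁ * (2 * ε' + t * Q) := by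
      have e1 : ε' * (Q - ε') ≤ ε' * h y := mul_le_mul_of_nonneg_left hyQ hε'pos.le
      have e2 : M₁ * (h x + ε') ≤ M₁ * (2 * ε' + t * Q) := by
        apply mul_le_mul_of_nonneg_left _ hM₁nn
        linarith
      linarith
    have hQbound : Q ≤ 2 * ε' + 4 * M₁ := by
      have hMtQ : M₁ * t * Q ≤ (ε' / 2) * Q := mul_le_mul_of_nonneg_right hMt hQpos.le
      nlinarith [hchain, hMtQ, mul_pos hε'pos hQpos, hε'pos]
    have h3 : t * Q ≤ t * (2 * ε' + 4 * M₁) :=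
      mul_le_mul_of_nonneg_left hQbound htpos.le
    linarith

/-- For a sequence of nonnegative convex functions `ψ_n`, the point `x` lies in the
relative interior of `I^b(x)`, i.e. `x ∈ I^B(x)`. -/
theorem mem_IB_self (Ψ : ℕ → EuclideanSpace ℝ (Fin d) → ℝ)
    (hconv : ∀ n, ConvexOn ℝ Set.univ (Ψ n)) (hpos : ∀ n y, 0 ≤ Ψ n y)
    (x : EuclideanSpace ℝ (Fin d)) :
    x ∈ IB Ψ x :=
  mem_intrinsicInterior_of_prolong (convex_Ib Ψ hconv x) (self_mem_Ib Ψ x)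
    (prolong_Ib Ψ hconv hpos x)
end
end

section
/- Let (ψ_n) be a sequence of nonnegative convex functions on ℝ^d and let {I^B(x)}_{x∈ℝ^d} be defined by I^B(x) = ri I^b(x) as in the Bass paving construction. If x₁ ∈ I^B(x) then I^B(x) = I^B(x₁); consequently, for x₁ ∉ I^B(x) the sets I^B(x) and I^B(x₁) are disjoint. Hence {I^B(x)} is a paving of ℝ^d into disjoint relatively open convex sets. -/
open MeasureTheory Set

noncomputable section


variable {d : ℕ}

local notation "E" => EuclideanSpace ℝ (Fin d)

-- affine function convexity helper
lemma affineInner_convexOn (a : E) (b : ℝ) :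
    ConvexOn ℝ univ (fun y : E => (inner ℝ a y : ℝ) + b) := by
  refine ⟨convex_univ, fun p _ q _ s t hs ht hst => ?_⟩
  simp only [inner_add_right, real_inner_smul_right, smul_eq_mul]
  have hb : s*b + t*b = b := by rw [← add_mul, hst, one_mul]
  linarith

lemma reps_convexOn_s4 {Ψ : ℕ → E → ℝ} (hconv : ∀ n, ConvexOn ℝ univ (Ψ n))
    {n : ℕ} {x : E} {ε : ℝ} {g : E → ℝ} (hg : g ∈ reps Ψ n x ε) :
    ConvexOn ℝ univ g := by
  obtain ⟨a, b, hrep, -, -⟩ := hg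
  have : g = fun y => Ψ n y + ((inner ℝ a y : ℝ) + b) := funext hrep
  rw [this]
  exact (hconv n).add (affineInner_convexOn a b)

lemma reps_nonneg {Ψ : ℕ → E → ℝ} {n : ℕ} {x : E} {ε : ℝ} {g : E → ℝ}
    (hg : g ∈ reps Ψ n x ε) : ∀ y, 0 ≤ g y := hg.choose_spec.choose_spec.2.1

lemma reps_lt {Ψ : ℕ → E → ℝ} {n : ℕ} {x : E} {ε : ℝ} {g : E → ℝ}
    (hg : g ∈ reps Ψ n x ε) : g x < ε := hg.choose_spec.choose_spec.2.2

lemma reps_mono {Ψ : ℕ → E → ℝ} {n : ℕ} {x : E} {ε ε' : ℝ} (h : ε ≤ ε') :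
    reps Ψ n x ε ⊆ reps Ψ n x ε' := by
  rintro g ⟨a, b, h1, h2, h3⟩
  exact ⟨a, b, h1, h2, lt_of_lt_of_le h3 h⟩

lemma reps_shift {Ψ : ℕ → E → ℝ} {n : ℕ} {x : E} {ε : ℝ} {g : E → ℝ}
    (hg : g ∈ reps Ψ n x ε) {a : E} {b : ℝ} (hle : ∀ w, (inner ℝ a w : ℝ) + b ≤ g w)
    {p : E} {ε' : ℝ} (hp : g p - ((inner ℝ a p : ℝ) + b) < ε') :
    (fun w => g w - ((inner ℝ a w : ℝ) + b)) ∈ reps Ψ n p ε' := by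
  obtain ⟨a₀, b₀, h1, h2, h3⟩ := hg
  refine ⟨a₀ - a, b₀ - b, fun y => ?_, fun y => sub_nonneg.2 (hle y), hp⟩
  show g y - (inner ℝ a y + b) = _
  rw [h1 y, inner_sub_left]; ring

/-- Key Hahn-Banach tool: a convex function on `ℝ^d` admits a global affine minorant that
agrees in slope with a given affine minorant along a line, and whose value at the base point
is at least that of the line. -/
lemma exists_affine_minorant {g : E → ℝ} (hg : ConvexOn ℝ univ g)
    (x u : E) (c₀ c₁ : ℝ) (hline : ∀ t : ℝ, c₀ + c₁ * t ≤ g (x + t • u)) :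
    ∃ (a : E) (b : ℝ), (∀ w, (inner ℝ a w : ℝ) + b ≤ g w) ∧
      c₀ ≤ (inner ℝ a x : ℝ) + b ∧ (inner ℝ a u : ℝ) = c₁ := by
  have hgc : Continuous g := hg.locallyLipschitz.continuous
  set S : Set (E × ℝ) := {p | g p.1 < p.2} with hS
  have hSopen : IsOpen S := isOpen_lt (hgc.comp continuous_fst) continuous_snd
  have hSconv : Convex ℝ S := by
    rintro p hp q hq s t hs ht hst
    simp only [hS, mem_setOf_eq] at hp hq ⊢
    have := hg.2 (mem_univ p.1) (mem_univ q.1) hs ht hst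
    calc g (s • p + t • q).1 = g (s • p.1 + t • q.1) := rfl
      _ ≤ s * g p.1 + t * g q.1 := by simpa [smul_eq_mul] using this
      _ < s * p.2 + t * q.2 := by
          rcases eq_or_lt_of_le hs with h0 | h0
          · have hst1 : t = 1 := by linarith
            simp only [← h0, hst1, zero_mul, one_mul, zero_add]
            exact hq
          · rcases eq_or_lt_of_le ht with h1 | h1
            · have hst1 : s = 1 := by linarith
              simp only [← h1, hst1, zero_mul, one_mul, add_zero]
              exact hp
            · exact add_lt_add (by nlinarith [hp]) (by nlinarith [hq])
      _ = (s • p + t • q).2 := by simp [smul_eq_mul]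
  set T : Set (E × ℝ) := range (fun t : ℝ => (x + t • u, c₀ + c₁ * t)) with hT
  have hTconv : Convex ℝ T := by
    rintro p ⟨t₁, rfl⟩ q ⟨t₂, rfl⟩ s t hs ht hst
    refine ⟨s * t₁ + t * t₂, ?_⟩
    apply Prod.ext
    · show x + (s * t₁ + t * t₂) • u = s • (x + t₁ • u) + t • (x + t₂ • u)
      have hx : s • x + t • x = x := by rw [← add_smul, hst, one_smul]
      rw [smul_add, smul_add, smul_smul, smul_smul, add_add_add_comm, hx, add_smul]
    · show c₀ + c₁ * (s * t₁ + t * t₂) = s * (c₀ + c₁ * t₁) + t * (c₀ + c₁ * t₂)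
      have : s * c₀ + t * c₀ = c₀ := by rw [← add_mul, hst, one_mul]
      nlinarith [this]
  have hdisj : Disjoint S T := by
    rw [Set.disjoint_left]
    rintro p hp ⟨t, rfl⟩
    exact absurd (hline t) (not_le.2 hp)
  obtain ⟨f, σ, hfS, hfT⟩ := geometric_hahn_banach_open hSconv hSopen hTconv hdisj
  set φ : ℝ := f (0, 1) with hφ
  have hsplit : ∀ (w : E) (r : ℝ), f (w, r) = f (w, 0) + r * φ := by
    intro w r
    have : (w, r) = (w, (0:ℝ)) + r • ((0:E), (1:ℝ)) := by
      simp [Prod.ext_iff]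
    rw [this, _root_.map_add, _root_.map_smul, smul_eq_mul]
  -- epi side: ∀ w r, g w < r → f(w,0) + r φ < σ
  have hepi : ∀ (w : E) (r : ℝ), g w < r → f (w, 0) + r * φ < σ := by
    intro w r h
    have := hfS (w, r) h
    rwa [hsplit] at this
  have hφneg : φ < 0 := by
    rcases lt_trichotomy φ 0 with h | h | h
    · exact h
    · exfalso
      have hw : ∀ w : E, f (w, 0) < σ := by
        intro w
        have := hepi w (g w + 1) (by linarith)
        rwa [h, mul_zero, add_zero] at this
      have h2 := hfT (x + 0 • u, c₀ + c₁ * 0) ⟨0, rfl⟩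
      rw [hsplit, h, mul_zero, add_zero] at h2
      simp only [zero_smul, add_zero] at h2
      exact absurd h2 (not_le.2 (hw x))
    · exfalso
      have h1 := hepi x (g x + 1) (by linarith)
      have h2 := hepi x (g x + 1 + (σ - (f (x,0) + (g x + 1) * φ) + 1)/φ) (by
        have : 0 < (σ - (f (x,0) + (g x + 1) * φ) + 1)/φ := by
          apply div_pos _ h
          linarith
        linarith)
      rw [add_mul, div_mul_cancel₀ _ (ne_of_gt h)] at h2
      linarith
  -- from epi side with r ↓ g w : f(w,0) + g w * φ ≤ σ
  have hφne : φ ≠ 0 := ne_of_lt hφneg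
  have hepi' : ∀ w : E, f (w, 0) + g w * φ ≤ σ := by
    intro w
    by_contra hc
    push_neg at hc
    have hδ : 0 < (f (w,0) + g w * φ - σ) / (-φ) := by
      apply div_pos (by linarith) (by linarith)
    have h2 := hepi w (g w + (f (w,0) + g w * φ - σ) / (-φ)) (by linarith)
    have h3 : ((f (w,0) + g w * φ - σ) / (-φ)) * φ = -(f (w,0) + g w * φ - σ) := by
      rw [div_neg, neg_mul, div_mul_cancel₀ _ hφne]
    rw [add_mul, h3] at h2
    linarith
  -- T side: ∀ t, σ ≤ f(x,0) + t * f(u,0)-ish + φ*(c₀ + c₁ t)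
  have hTside : ∀ t : ℝ, σ ≤ f (x, 0) + t * f (u, 0) + (c₀ + c₁ * t) * φ := by
    intro t
    have := hfT (x + t • u, c₀ + c₁ * t) ⟨t, rfl⟩
    rw [hsplit] at this
    have he : f ((x + t • u : E), (0:ℝ)) = f (x, 0) + t * f (u, 0) := by
      have : ((x + t • u : E), (0:ℝ)) = ((x:E), (0:ℝ)) + t • ((u:E), (0:ℝ)) := by
        simp [Prod.ext_iff]
      rw [this, _root_.map_add, _root_.map_smul, smul_eq_mul]
    rw [he] at this
    linarith
  have hkey : ∀ t : ℝ, f (x,0) + t * f (u, 0) + (c₀ + c₁ * t) * φ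
      = (f (x,0) + c₀ * φ) + t * (f (u,0) + c₁ * φ) := by intro t; ring
  have hslope : f (u, 0) + c₁ * φ = 0 := by
    by_contra hc
    have h1 := hTside ((σ - (f (x,0) + c₀ * φ) - 1) / (f (u, 0) + c₁ * φ))
    rw [hkey, div_mul_cancel₀ _ hc] at h1
    linarith
  -- build the affine minorant
  set φ₁ : E →L[ℝ] ℝ := f.comp (ContinuousLinearMap.inl ℝ E ℝ) with hφ₁
  have hφ₁app : ∀ w : E, φ₁ w = f (w, 0) := fun w => rfl
  set a : E := (-(1:ℝ)/φ) • ((InnerProductSpace.toDual ℝ (EuclideanSpace ℝ (Fin d))).symm φ₁) with ha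
  set b : ℝ := σ / φ with hb
  have hinner : ∀ w : E, (inner ℝ a w : ℝ) = (-(1:ℝ)/φ) * f (w, 0) := by
    intro w
    rw [ha, real_inner_smul_left]
    congr 1
    exact InnerProductSpace.toDual_symm_apply
  refine ⟨a, b, ?_, ?_, ?_⟩
  · intro w
    rw [hinner, hb]
    have h2 : -1/φ * f (w,0) + σ/φ = (σ - f (w,0))/φ := by ring
    rw [h2, div_le_iff_of_neg hφneg]
    linarith [hepi' w]
  · rw [hinner, hb]
    have h1 := hTside 0
    rw [hkey, zero_mul, add_zero] at h1
    have h2 : -1/φ * f (x,0) + σ/φ = (σ - f (x,0))/φ := by ring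
    rw [h2, le_div_iff_of_neg hφneg]
    linarith
  · rw [hinner]
    have h2 : f (u,0) = -(c₁ * φ) := by linarith [hslope]
    rw [h2]
    have h3 : (-1/φ) * -(c₁ * φ) = c₁ * (φ/φ) := by ring
    rw [h3, div_self hφne, mul_one]

lemma exists_affine_minorant_pt {g : E → ℝ} (hg : ConvexOn ℝ univ g)
    (p : E) {η : ℝ} (hη : 0 < η) :
    ∃ (a : E) (b : ℝ), (∀ w, (inner ℝ a w : ℝ) + b ≤ g w) ∧ g p - ((inner ℝ a p : ℝ) + b) < η := by
  obtain ⟨a, b, h1, h2, -⟩ := exists_affine_minorant hg p 0 (g p - η/2) 0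
    (fun t => by simp [zero_smul, mul_comm]; linarith)
  exact ⟨a, b, h1, by linarith⟩

lemma Ib_convex {Ψ : ℕ → E → ℝ} (hconv : ∀ n, ConvexOn ℝ univ (Ψ n)) (x : E) :
    Convex ℝ (Ib Ψ x) := by
  rintro y₁ ⟨ε₁, hε₁, M₁, hM₁⟩ y₂ ⟨ε₂, hε₂, M₂, hM₂⟩ s t hs ht hst
  refine ⟨min ε₁ ε₂, lt_min hε₁ hε₂, max M₁ M₂, fun n g hg => ?_⟩
  have hgc := reps_convexOn_s4 hconv hg
  calc g (s • y₁ + t • y₂) ≤ s * g y₁ + t * g y₂ := by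
        simpa [smul_eq_mul] using hgc.2 (mem_univ y₁) (mem_univ y₂) hs ht hst
    _ ≤ s * max M₁ M₂ + t * max M₁ M₂ := by
        have b1 := hM₁ n g (reps_mono (min_le_left _ _) hg)
        have b2 := hM₂ n g (reps_mono (min_le_right _ _) hg)
        have := le_max_left M₁ M₂
        have := le_max_right M₁ M₂
        gcongr <;> linarith
    _ = max M₁ M₂ := by rw [← add_mul, hst, one_mul]

lemma mem_Ib_self (Ψ : ℕ → E → ℝ) (x : E) : x ∈ Ib Ψ x :=
  ⟨1, one_pos, 1, fun _ g hg => le_of_lt (reps_lt hg)⟩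

/-- The "D" lemma: the radial property of `x` inside `Ib Ψ x`. -/
lemma Ib_radial {Ψ : ℕ → E → ℝ} (hconv : ∀ n, ConvexOn ℝ univ (Ψ n)) {x y : E}
    (hy : y ∈ Ib Ψ x) : ∃ δ : ℝ, 0 < δ ∧ δ ≤ 1 ∧ x + δ • (x - y) ∈ Ib Ψ x := by
  obtain ⟨ε₀, hε₀, M₀', hM₀'⟩ := hy
  obtain ⟨M, hMnn, hM₀⟩ : ∃ M : ℝ, 0 ≤ M ∧ ∀ n, ∀ g ∈ reps Ψ n x ε₀, g y ≤ M :=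
    ⟨max M₀' 0, le_max_right _ _, fun n g hg => le_trans (hM₀' n g hg) (le_max_left _ _)⟩
  set C := M + ε₀ with hC
  have hCpos : 0 < C := by positivity
  obtain ⟨δ, hδpos, hδC, hδ1⟩ : ∃ δ : ℝ, 0 < δ ∧ δ * C = ε₀ / 4 ∧ δ ≤ 1 := by
    refine ⟨ε₀ / (4 * C), by positivity, by field_simp, ?_⟩
    rw [div_le_one (by positivity)]
    linarith
  clear_value C
  refine ⟨δ, hδpos, hδ1, ε₀/4, by positivity, ε₀, fun n g hg => ?_⟩
  by_contra hK
  push_neg at hK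
  have hgc := reps_convexOn_s4 hconv hg
  have hgnn := reps_nonneg hg
  have hgx : g x < ε₀/4 := reps_lt hg
  have hgy : g y ≤ M := hM₀ n g (reps_mono (by linarith) hg)
  set u := y - x with hu
  have hz : x + δ • (x - y) = x + (-δ) • u := by
    rw [hu, neg_smul, ← smul_neg, neg_sub]
  rw [hz] at hK
  have hline : ∀ t : ℝ, (g x - ε₀/2) + (-C) * t ≤ g (x + t • u) := by
    intro t
    rcases le_or_gt (-δ) t with h | h
    · have h2 : C * (-t) ≤ C * δ := mul_le_mul_of_nonneg_left (by linarith) (le_of_lt hCpos)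
      have h3 : 0 ≤ g (x + t • u) := hgnn _
      nlinarith
    · have htneg : t < 0 := by linarith
      have ht0 : t ≠ 0 := ne_of_lt htneg
      set lam := δ / (-t) with hlam
      have hlampos : 0 < lam := div_pos hδpos (by linarith)
      have hlamle : lam ≤ 1 := by
        rw [hlam, div_le_one (by linarith)]
        linarith
      have hlamt : lam * t = -δ := by
        rw [hlam, div_mul_eq_mul_div, div_neg, mul_div_assoc, div_self ht0, mul_one]
      have hcomb : lam • (x + t • u) + (1 - lam) • x = x + (-δ) • u := by
        rw [smul_add, smul_smul, hlamt]
        rw [sub_smul, one_smul]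
        abel
      have hconvineq := hgc.2 (mem_univ (x + t • u)) (mem_univ x)
        (le_of_lt hlampos) (show (0:ℝ) ≤ 1 - lam by linarith)
        (show lam + (1 - lam) = 1 by ring)
      rw [hcomb] at hconvineq
      simp only [smul_eq_mul] at hconvineq
      have hKK : ε₀ < lam * g (x + t • u) + (1 - lam) * g x := lt_of_lt_of_le hK hconvineq
      rw [← sub_nonneg]
      have hmul : 0 ≤ lam * (g (x + t • u) - ((g x - ε₀/2) + (-C) * t)) := by
        have hexp : lam * (g (x + t • u) - ((g x - ε₀/2) + (-C) * t))
            = (lam * g (x + t • u) + (1 - lam) * g x) - g x + lam * (ε₀/2) + C * (lam * t) := by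
          ring
        rw [hexp, hlamt]
        have h1 : C * (-δ) = -(ε₀/4) := by
          rw [mul_comm, neg_mul, hδC]
        rw [h1]
        have h2 : 0 ≤ lam * (ε₀/2) := by positivity
        linarith
      exact nonneg_of_mul_nonneg_right hmul hlampos
  obtain ⟨a, b, hab1, hab2, hab3⟩ := exists_affine_minorant hgc x u (g x - ε₀/2) (-C) hline
  have hBx : g x - ((inner ℝ a x : ℝ) + b) < ε₀ := by linarith
  have hB := reps_shift hg hab1 hBx
  have hBy := hM₀ n _ hB
  have hly : (inner ℝ a y : ℝ) + b = ((inner ℝ a x : ℝ) + b) + (inner ℝ a u : ℝ) := by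
    have hyx : y = x + u := by rw [hu]; abel
    rw [hyx, inner_add_right]
    ring
  rw [hly, hab3] at hBy
  have hlx : (inner ℝ a x : ℝ) + b ≤ g x := hab1 x
  have hgynn := hgnn y
  have hfin : C - g x > M := by
    rw [hC]
    linarith
  linarith

/-- The "R" lemma: transfer of membership via reflection about an interior certified point. -/
lemma Ib_reflect {Ψ : ℕ → E → ℝ} (hconv : ∀ n, ConvexOn ℝ univ (Ψ n)) {x m q : E}
    (hm : m ∈ Ib Ψ x) (hq : q ∈ Ib Ψ m) (hq' : m + (m - q) ∈ Ib Ψ m) :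
    q ∈ Ib Ψ x := by
  obtain ⟨εm, hεm, Mm, hMm⟩ := hm
  obtain ⟨εq, hεq, Mq, hMq⟩ := hq
  obtain ⟨εq', hεq', Mq', hMq'⟩ := hq'
  refine ⟨εm, hεm, Mq + 2 * Mm + Mq', fun n g hg => ?_⟩
  have hgc := reps_convexOn_s4 hconv hg
  have hgnn := reps_nonneg hg
  have hgm : g m ≤ Mm := hMm n g hg
  set η := min εq εq' with hη
  have hηpos : 0 < η := lt_min hεq hεq'
  obtain ⟨a, b, hab1, hab2⟩ := exists_affine_minorant_pt hgc m hηpos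
  have hB := reps_shift hg hab1 hab2
  have hBq := hMq n _ (reps_mono (min_le_left _ _) hB)
  have hBq' := hMq' n _ (reps_mono (min_le_right _ _) hB)
  -- ℓ q + ℓ q' = 2 ℓ m
  have hrefl : ((inner ℝ a q : ℝ) + b) + ((inner ℝ a (m + (m - q)) : ℝ) + b)
      = 2 * ((inner ℝ a m : ℝ) + b) := by
    rw [inner_add_right, inner_sub_right]
    ring
  have hlm : (inner ℝ a m : ℝ) + b ≤ g m := hab1 m
  have hq'nn := hgnn (m + (m - q))
  -- g q = B q + ℓ q ≤ Mq + 2 ℓ m - ℓ q' ≤ Mq + 2 Mm + Mq'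
  have h1 : g q - ((inner ℝ a q : ℝ) + b) ≤ Mq := hBq
  have h2 : g (m + (m - q)) - ((inner ℝ a (m + (m - q)) : ℝ) + b) ≤ Mq' := hBq'
  linarith

/-- One step into the segment from `x₁` towards a point of `Ib Ψ x₁` stays in `Ib Ψ x`. -/
lemma Ib_first_step {Ψ : ℕ → E → ℝ} (hconv : ∀ n, ConvexOn ℝ univ (Ψ n)) {x x₁ ζ : E}
    (hx₁ : x₁ ∈ Ib Ψ x) (hζ : ζ ∈ Ib Ψ x₁) :
    ∃ δ : ℝ, 0 < δ ∧ δ ≤ 1 ∧ x₁ + δ • (ζ - x₁) ∈ Ib Ψ x := by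
  obtain ⟨δ, hδpos, hδ1, hmem⟩ := Ib_radial hconv hζ
  refine ⟨δ, hδpos, hδ1, ?_⟩
  have hq : x₁ + δ • (ζ - x₁) ∈ Ib Ψ x₁ := by
    have hcomb := (Ib_convex hconv x₁) (mem_Ib_self Ψ x₁) hζ
      (show (0:ℝ) ≤ 1 - δ by linarith) (le_of_lt hδpos) (show 1 - δ + δ = 1 by ring)
    have hid : (1 - δ) • x₁ + δ • ζ = x₁ + δ • (ζ - x₁) := by
      rw [sub_smul, one_smul, smul_sub]
      abel
    rwa [hid] at hcomb
  have hq' : x₁ + (x₁ - (x₁ + δ • (ζ - x₁))) ∈ Ib Ψ x₁ := by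
    have hid : x₁ + (x₁ - (x₁ + δ • (ζ - x₁))) = x₁ + δ • (x₁ - ζ) := by
      rw [smul_sub, smul_sub]
      abel
    rw [hid]
    exact hmem
  exact Ib_reflect hconv hx₁ hq hq'

lemma convex_comb3 {A : Set E} (hA : Convex ℝ A) {p₁ p₂ p₃ : E}
    (h1 : p₁ ∈ A) (h2 : p₂ ∈ A) (h3 : p₃ ∈ A) {c₁ c₂ c₃ : ℝ}
    (hc1 : 0 ≤ c₁) (hc2 : 0 ≤ c₂) (hc3 : 0 ≤ c₃) (hsum : c₁ + c₂ + c₃ = 1) :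
    c₁ • p₁ + c₂ • p₂ + c₃ • p₃ ∈ A := by
  rcases eq_or_lt_of_le (add_nonneg hc2 hc3) with h0 | h0
  · have hc2' : c₂ = 0 := by linarith
    have hc3' : c₃ = 0 := by linarith
    have hc1' : c₁ = 1 := by linarith
    simpa [hc1', hc2', hc3'] using h1
  · have ht : c₂ + c₃ ≠ 0 := ne_of_gt h0
    have hp : (c₂/(c₂+c₃)) • p₂ + (c₃/(c₂+c₃)) • p₃ ∈ A :=
      hA h2 h3 (div_nonneg hc2 (le_of_lt h0)) (div_nonneg hc3 (le_of_lt h0))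
        (by field_simp)
    have hfin := hA h1 hp hc1 (le_of_lt h0) (by linarith)
    have hexp : c₁ • p₁ + (c₂ + c₃) • ((c₂/(c₂+c₃)) • p₂ + (c₃/(c₂+c₃)) • p₃)
        = c₁ • p₁ + c₂ • p₂ + c₃ • p₃ := by
      rw [smul_add, smul_smul, smul_smul]
      rw [mul_div_cancel₀ _ ht, mul_div_cancel₀ _ ht]
      abel
    rwa [hexp] at hfin

lemma segment_param_mem {A : Set E} (hA : Convex ℝ A) {x v : E} {r : ℝ} (hr : 0 < r)
    (h1 : x + r • v ∈ A) (h2 : x + (-r) • v ∈ A) : ∀ σ : ℝ, |σ| ≤ r → x + σ • v ∈ A := by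
  intro σ hσ
  rw [abs_le] at hσ
  have hrne : r ≠ 0 := ne_of_gt hr
  set lam := (σ + r)/(2*r) with hlam
  have h0 : 0 ≤ lam := div_nonneg (by linarith) (by positivity)
  have h1le : lam ≤ 1 := by
    rw [hlam, div_le_one (by positivity)]
    linarith
  have hcomb := hA h1 h2 h0 (show (0:ℝ) ≤ 1 - lam by linarith)
    (show lam + (1 - lam) = 1 by ring)
  have hexp : lam • (x + r • v) + (1 - lam) • (x + (-r) • v) = x + σ • v := by
    rw [smul_add, smul_add, smul_smul, smul_smul]
    have hx : lam • x + (1 - lam) • x = x := by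
      rw [← add_smul]
      simp
    have hc : lam * r + (1 - lam) * (-r) = σ := by
      rw [hlam]
      field_simp
      ring
    calc lam • x + (lam * r) • v + ((1 - lam) • x + ((1 - lam) * (-r)) • v)
        = (lam • x + (1 - lam) • x) + ((lam * r) • v + ((1 - lam) * (-r)) • v) := by abel
      _ = x + σ • v := by rw [hx, ← add_smul, hc]
  rwa [hexp] at hcomb

lemma crossPolytope_mem {A : Set E} (hA : Convex ℝ A) {x : E} (hx : x ∈ A)
    {m : ℕ} (u : Fin m → E) {r : ℝ} (hr : 0 < r)
    (hvert : ∀ j : Fin m, ∀ σ : ℝ, |σ| ≤ r → x + σ • u j ∈ A) :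
    ∀ (t : Fin m → ℝ), (∑ j, |t j|) ≤ r → x + (∑ j, t j • u j) ∈ A := by
  suffices h : ∀ s : Finset (Fin m), ∀ t : Fin m → ℝ,
      (∑ j ∈ s, |t j|) ≤ r → x + (∑ j ∈ s, t j • u j) ∈ A by
    intro t ht
    exact h Finset.univ t ht
  intro s
  induction s using Finset.induction_on with
  | empty => intro t ht; simpa using hx
  | @insert j s hj ih =>
    intro t ht
    rw [Finset.sum_insert hj] at ht ⊢
    by_cases htj : t j = 0
    · rw [htj]
      simp only [zero_smul, zero_add]
      apply ih
      rw [htj] at ht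
      simp only [abs_zero, zero_add] at ht
      exact ht
    · set S := ∑ i ∈ s, |t i| with hS
      set T := |t j| + S with hT
      have hSnn : 0 ≤ S := Finset.sum_nonneg (fun i _ => abs_nonneg _)
      have htjpos : 0 < |t j| := abs_pos.2 htj
      have hTpos : 0 < T := by rw [hT]; linarith
      have hTne : T ≠ 0 := ne_of_gt hTpos
      rcases eq_or_lt_of_le hSnn with hS0 | hS0
      · -- all other coordinates vanish
        have hzero : ∀ i ∈ s, t i = 0 := by
          intro i hi
          have := (Finset.sum_eq_zero_iff_of_nonneg (fun i _ => abs_nonneg (t i))).1 hS0.symm i hi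
          exact abs_eq_zero.1 this
        have hsum0 : (∑ i ∈ s, t i • u i) = 0 :=
          Finset.sum_eq_zero (fun i hi => by rw [hzero i hi, zero_smul])
        rw [hsum0, add_zero]
        exact hvert j (t j) (by rw [hT, ← hS0] at ht; linarith)
      · set lam := S / T with hlam
        have hlampos : 0 < lam := div_pos hS0 hTpos
        have hlamle : lam < 1 := by
          rw [hlam, div_lt_one hTpos]
          rw [hT]; linarith
        set σ : ℝ := if 0 ≤ t j then T else -T with hσ
        have hσabs : |σ| = T := by
          rw [hσ]
          split_ifs <;> simp [abs_of_pos hTpos, abs_of_neg (neg_neg_iff_pos.2 hTpos)]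
        have hP₂ : x + σ • u j ∈ A := hvert j σ (by rw [hσabs, hT]; linarith)
        have hP₁ : x + (∑ i ∈ s, ((T/S) * t i) • u i) ∈ A := by
          apply ih
          have : (∑ i ∈ s, |(T/S) * t i|) = (T/S) * S := by
            rw [Finset.mul_sum]
            apply Finset.sum_congr rfl
            intro i hi
            rw [abs_mul, abs_of_pos (div_pos hTpos hS0)]
          rw [this, div_mul_cancel₀ _ (ne_of_gt hS0)]
          rw [hT]; linarith
        have hcomb := hA hP₁ hP₂ (le_of_lt hlampos)
          (show (0:ℝ) ≤ 1 - lam by linarith) (show lam + (1 - lam) = 1 by ring)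
        have hexp : lam • (x + (∑ i ∈ s, ((T/S) * t i) • u i)) + (1 - lam) • (x + σ • u j)
            = x + (t j • u j + ∑ i ∈ s, t i • u i) := by
          rw [smul_add, smul_add]
          have hx2 : lam • x + (1 - lam) • x = x := by rw [← add_smul]; simp
          have hsum2 : lam • (∑ i ∈ s, ((T/S) * t i) • u i) = ∑ i ∈ s, t i • u i := by
            rw [Finset.smul_sum]
            apply Finset.sum_congr rfl
            intro i hi
            rw [smul_smul, hlam]
            congr 1
            have hSne : S ≠ 0 := ne_of_gt hS0
            field_simp
          have hlast : (1 - lam) • (σ • u j) = t j • u j := by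
            rw [smul_smul]
            congr 1
            have h1m : 1 - lam = |t j| / T := by
              rw [hlam]
              rw [eq_div_iff hTne, sub_mul, div_mul_cancel₀ _ hTne, one_mul, hT]
              ring
            rw [h1m, hσ]
            split_ifs with hsgn
            · rw [div_mul_cancel₀ _ (ne_of_gt hTpos)]
              exact abs_of_nonneg hsgn
            · rw [mul_neg, div_mul_cancel₀ _ (ne_of_gt hTpos), ← abs_neg]
              rw [abs_of_nonneg (by push_neg at hsgn; linarith)]
              ring
          calc lam • x + lam • (∑ i ∈ s, ((T/S) * t i) • u i)
              + ((1 - lam) • x + (1 - lam) • (σ • u j))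
              = (lam • x + (1 - lam) • x) + ((1 - lam) • (σ • u j)
                + lam • (∑ i ∈ s, ((T/S) * t i) • u i)) := by abel
            _ = x + (t j • u j + ∑ i ∈ s, t i • u i) := by rw [hx2, hsum2, hlast]
        rwa [hexp] at hcomb

lemma move_in_span {A : Set E} (hA : Convex ℝ A) {x : E} (hx : x ∈ A)
    (hrad : ∀ y ∈ A, ∃ δ : ℝ, 0 < δ ∧ x + δ • (x - y) ∈ A) {w : E}
    (hw : w ∈ vectorSpan ℝ A) : ∃ τ : ℝ, 0 < τ ∧ ∀ σ : ℝ, |σ| ≤ τ → x + σ • w ∈ A := by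
  have hside : ∀ a ∈ A, ∀ b ∈ A, ∃ τ : ℝ, 0 < τ ∧
      ∀ σ : ℝ, 0 ≤ σ → σ ≤ τ → x + σ • (a - b) ∈ A := by
    intro a ha b hb
    obtain ⟨δ, hδpos, hδmem⟩ := hrad b hb
    have hδne : δ ≠ 0 := ne_of_gt hδpos
    refine ⟨δ/(δ + 1), div_pos hδpos (by linarith), fun σ hσ0 hστ => ?_⟩
    have h1 : σ * (δ + 1) ≤ δ := (le_div_iff₀ (by linarith)).1 hστ
    have hc1 : 0 ≤ 1 - σ - σ/δ := by
      have h2 : σ / δ ≤ 1 - σ := by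
        rw [div_le_iff₀ hδpos]
        nlinarith
      linarith
    have hc3 : 0 ≤ σ/δ := div_nonneg hσ0 (le_of_lt hδpos)
    have hmem := convex_comb3 hA hx ha hδmem hc1 hσ0 hc3 (by ring)
    have hexp : (1 - σ - σ/δ) • x + σ • a + (σ/δ) • (x + δ • (x - b))
        = x + σ • (a - b) := by
      rw [smul_add, smul_smul, div_mul_cancel₀ _ hδne]
      rw [smul_sub σ x b, smul_sub σ a b, sub_smul, sub_smul, one_smul]
      abel
    rwa [hexp] at hmem
  have hboth : ∀ a ∈ A, ∀ b ∈ A, ∃ τ : ℝ, 0 < τ ∧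
      ∀ σ : ℝ, |σ| ≤ τ → x + σ • (a - b) ∈ A := by
    intro a ha b hb
    obtain ⟨τ₁, hτ₁, hm₁⟩ := hside a ha b hb
    obtain ⟨τ₂, hτ₂, hm₂⟩ := hside b hb a ha
    refine ⟨min τ₁ τ₂, lt_min hτ₁ hτ₂, fun σ hσ => ?_⟩
    rw [abs_le] at hσ
    rcases le_or_gt 0 σ with h | h
    · exact hm₁ σ h (le_trans hσ.2 (min_le_left _ _))
    · have := hm₂ (-σ) (by linarith) (by
        have := hσ.1
        have h3 := min_le_right τ₁ τ₂
        linarith)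
      have hid : x + (-σ) • (b - a) = x + σ • (a - b) := by
        rw [neg_smul, ← smul_neg, neg_sub]
      rwa [hid] at this
  have hw' : w ∈ Submodule.span ℝ (A -ᵥ A) := by
    rw [← vectorSpan_def]
    exact hw
  clear hw
  induction hw' using Submodule.span_induction with
  | mem v hv =>
      obtain ⟨a, ha, b, hb, rfl⟩ := hv
      simp only [vsub_eq_sub]
      exact hboth a ha b hb
  | zero => exact ⟨1, one_pos, fun σ _ => by simpa using hx⟩
  | add v₁ v₂ hv₁ hv₂ ih₁ ih₂ =>
      obtain ⟨τ₁, hτ₁, hm₁⟩ := ih₁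
      obtain ⟨τ₂, hτ₂, hm₂⟩ := ih₂
      refine ⟨min τ₁ τ₂ / 2, by positivity, fun σ hσ => ?_⟩
      have h1 : x + (2*σ) • v₁ ∈ A := by
        apply hm₁
        rw [abs_mul, abs_two]
        have h2 := min_le_left τ₁ τ₂
        calc 2 * |σ| ≤ 2 * (min τ₁ τ₂ / 2) := by linarith
          _ ≤ τ₁ := by linarith
      have h2 : x + (2*σ) • v₂ ∈ A := by
        apply hm₂
        rw [abs_mul, abs_two]
        have h3 := min_le_right τ₁ τ₂
        calc 2 * |σ| ≤ 2 * (min τ₁ τ₂ / 2) := by linarith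
          _ ≤ τ₂ := by linarith
      have hcomb := hA h1 h2 (by norm_num : (0:ℝ) ≤ 1/2) (by norm_num : (0:ℝ) ≤ 1/2)
        (by norm_num)
      have hexp : (1/2 : ℝ) • (x + (2*σ) • v₁) + (1/2 : ℝ) • (x + (2*σ) • v₂)
          = x + σ • (v₁ + v₂) := by
        rw [smul_add, smul_add, smul_smul, smul_smul, smul_add]
        have e1 : (1/2 : ℝ) * (2 * σ) = σ := by ring
        rw [e1]
        have e2 : (1/2 : ℝ) • x + ((1/2 : ℝ) • x) = x := by
          rw [← add_smul]
          norm_num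
        calc (1/2 : ℝ) • x + σ • v₁ + ((1/2 : ℝ) • x + σ • v₂)
            = ((1/2 : ℝ) • x + ((1/2 : ℝ) • x)) + (σ • v₁ + σ • v₂) := by abel
          _ = x + (σ • v₁ + σ • v₂) := by rw [e2]
      rwa [hexp] at hcomb
  | smul c v hv ih =>
      obtain ⟨τ, hτ, hm⟩ := ih
      rcases eq_or_ne c 0 with rfl | hc
      · exact ⟨1, one_pos, fun σ _ => by simpa using hx⟩
      · have hcpos : 0 < |c| := abs_pos.2 hc
        refine ⟨τ / |c|, by positivity, fun σ hσ => ?_⟩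
        have h1 : |σ * c| ≤ τ := by
          rw [abs_mul]
          exact (le_div_iff₀ hcpos).1 hσ
        rw [smul_smul]
        exact hm (σ * c) h1

lemma finite_cert {Ψ : ℕ → E → ℝ} {x : E} {ι : Type} [Fintype ι] (p : ι → E)
    (h : ∀ i, p i ∈ Ib Ψ x) :
    ∃ ε : ℝ, 0 < ε ∧ ∃ M : ℝ, ∀ i, ∀ n, ∀ g ∈ reps Ψ n x ε, g (p i) ≤ M := by
  suffices hs : ∀ s : Finset ι, ∃ ε : ℝ, 0 < ε ∧ ∃ M : ℝ,
      ∀ i ∈ s, ∀ n, ∀ g ∈ reps Ψ n x ε, g (p i) ≤ M by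
    obtain ⟨ε, hε, M, hM⟩ := hs Finset.univ
    exact ⟨ε, hε, M, fun i => hM i (Finset.mem_univ i)⟩
  classical
  intro s
  induction s using Finset.induction_on with
  | empty => exact ⟨1, one_pos, 0, fun i hi => absurd hi (Finset.notMem_empty i)⟩
  | @insert j s hj ih =>
      obtain ⟨ε₁, hε₁, M₁, hM₁⟩ := ih
      obtain ⟨ε₂, hε₂, M₂, hM₂⟩ := h j
      refine ⟨min ε₁ ε₂, lt_min hε₁ hε₂, max M₁ M₂, fun i hi n g hg => ?_⟩
      rcases Finset.mem_insert.1 hi with rfl | hi'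
      · exact le_trans (hM₂ n g (reps_mono (min_le_right _ _) hg)) (le_max_right _ _)
      · exact le_trans (hM₁ i hi' n g (reps_mono (min_le_left _ _) hg)) (le_max_left _ _)

lemma exists_uniform_pos {m : ℕ} (τ : Fin m → ℝ) (h : ∀ j, 0 < τ j) :
    ∃ r : ℝ, 0 < r ∧ ∀ j, r ≤ τ j := by
  rcases isEmpty_or_nonempty (Fin m) with he | hne
  · exact ⟨1, one_pos, fun j => (he.false j).elim⟩
  · obtain ⟨j₀, -, hj₀⟩ := Finset.exists_min_image Finset.univ τ
      ⟨Classical.arbitrary _, Finset.mem_univ _⟩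
    exact ⟨τ j₀, h j₀, fun j => hj₀ j (Finset.mem_univ j)⟩

/-- Uniform bound for `reps Ψ n x` on a small ball (within the affine directions)
around a radial point `x₁` of `Ib Ψ x`. -/
lemma ball_bound {Ψ : ℕ → E → ℝ} (hconv : ∀ n, ConvexOn ℝ univ (Ψ n)) {x x₁ : E}
    (hx₁ : x₁ ∈ Ib Ψ x)
    (hrad : ∀ y ∈ Ib Ψ x, ∃ δ : ℝ, 0 < δ ∧ x₁ + δ • (x₁ - y) ∈ Ib Ψ x) :
    ∃ ρ : ℝ, 0 < ρ ∧ ∃ εK : ℝ, 0 < εK ∧ ∃ MK : ℝ, 0 ≤ MK ∧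
      ∀ w ∈ vectorSpan ℝ (Ib Ψ x), ‖w‖ ≤ ρ →
        ∀ n, ∀ g ∈ reps Ψ n x εK, g (x₁ + w) ≤ MK := by
  set V := vectorSpan ℝ (Ib Ψ x) with hV
  set m := Module.finrank ℝ ↥V with hm
  set bV := stdOrthonormalBasis ℝ ↥V with hbV
  have hmove : ∀ j : Fin m, ∃ τ : ℝ, 0 < τ ∧
      ∀ σ : ℝ, |σ| ≤ τ → x₁ + σ • ((bV j : ↥V) : E) ∈ Ib Ψ x := fun j =>
    move_in_span (Ib_convex hconv x) hx₁ hrad (SetLike.coe_mem _)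
  choose τ hτpos hτmem using hmove
  obtain ⟨r, hrpos, hrτ⟩ := exists_uniform_pos τ hτpos
  set vert : Fin m × Bool → E :=
    fun js => x₁ + (if js.2 then r else -r) • ((bV js.1 : ↥V) : E) with hvert
  have hvmem : ∀ js, vert js ∈ Ib Ψ x := by
    rintro ⟨j, s⟩
    apply hτmem j
    rcases s with _ | _ <;>
      simp [abs_of_pos hrpos, abs_of_neg (neg_neg_iff_pos.2 hrpos), hrτ j]
  obtain ⟨εv, hεv, Mv, hMv⟩ := finite_cert vert hvmem
  obtain ⟨ε₁, hε₁, M₁, hM₁⟩ := hx₁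
  refine ⟨r/(m+1), by positivity, min εv ε₁, lt_min hεv hε₁,
    max (max Mv M₁) 0, le_max_right _ _, ?_⟩
  intro w hwV hwn n g hg
  set MK := max (max Mv M₁) 0 with hMK
  have hgc := reps_convexOn_s4 hconv hg
  have hCconv : Convex ℝ {p : E | g p ≤ MK} := by
    have h1 := hgc.convex_le MK
    have h2 : {p ∈ univ | g p ≤ MK} = {p : E | g p ≤ MK} := by
      ext p; simp
    rwa [h2] at h1
  have hxC : x₁ ∈ {p : E | g p ≤ MK} := by
    have := hM₁ n g (reps_mono (min_le_right _ _) hg)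
    simp only [mem_setOf_eq]
    calc g x₁ ≤ M₁ := this
      _ ≤ MK := le_trans (le_max_right Mv M₁) (le_max_left _ _)
  have hvertC : ∀ (j : Fin m) (σ : ℝ), |σ| ≤ r → x₁ + σ • ((bV j : ↥V) : E) ∈ {p : E | g p ≤ MK} := by
    intro j σ hσ
    apply segment_param_mem hCconv hrpos _ _ σ hσ
    · have := hMv (j, true) n g (reps_mono (min_le_left _ _) hg)
      simp only [hvert, if_pos] at this
      simp only [mem_setOf_eq]
      calc g (x₁ + r • ((bV j : ↥V) : E)) ≤ Mv := this
        _ ≤ MK := le_trans (le_max_left Mv M₁) (le_max_left _ _)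
    · have := hMv (j, false) n g (reps_mono (min_le_left _ _) hg)
      simp only [hvert, if_neg] at this
      simp only [mem_setOf_eq]
      calc g (x₁ + (-r) • ((bV j : ↥V) : E)) ≤ Mv := by simpa using this
        _ ≤ MK := le_trans (le_max_left Mv M₁) (le_max_left _ _)
  set w' : ↥V := ⟨w, hwV⟩ with hw'
  set t : Fin m → ℝ := fun j => bV.repr w' j with ht
  have hsum : ∑ j, t j • ((bV j : ↥V) : E) = w := by
    have h1 := bV.sum_repr w'
    calc ∑ j, t j • ((bV j : ↥V) : E) = ((∑ j, t j • bV j : ↥V) : E) := by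
          push_cast
          rfl
      _ = ((w' : ↥V) : E) := by rw [h1]
      _ = w := rfl
  have htle : ∀ j, |t j| ≤ r/(m+1) := by
    intro j
    have h1 : t j = (inner ℝ (bV j) w' : ℝ) := bV.repr_apply_apply w' j
    have h2 : |(inner ℝ (bV j) w' : ℝ)| ≤ ‖bV j‖ * ‖w'‖ := abs_real_inner_le_norm _ _
    have h3 : ‖bV j‖ = 1 := bV.orthonormal.1 j
    have h4 : ‖w'‖ = ‖w‖ := rfl
    rw [h1]
    calc |(inner ℝ (bV j) w' : ℝ)| ≤ ‖bV j‖ * ‖w'‖ := h2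
      _ = ‖w‖ := by rw [h3, h4, one_mul]
      _ ≤ r/(m+1) := hwn
  have habs : ∑ j, |t j| ≤ r := by
    calc ∑ j, |t j| ≤ ∑ _j : Fin m, r/(m+1) := Finset.sum_le_sum (fun j _ => htle j)
      _ = m * (r/(m+1)) := by
          rw [Finset.sum_const, Finset.card_univ, Fintype.card_fin, nsmul_eq_mul]
      _ ≤ r := by
          have hm1 : (0:ℝ) < (m:ℝ) + 1 := by positivity
          rw [mul_div_assoc']
          rw [div_le_iff₀ hm1]
          nlinarith [hrpos, Nat.cast_nonneg (α := ℝ) m]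
  have hfin := crossPolytope_mem hCconv hxC (fun j => ((bV j : ↥V) : E)) hrpos hvertC t habs
  rw [hsum] at hfin
  exact hfin

lemma slope_core {a : E} {b : ℝ} {x₁ v : E} (hv : v ≠ 0) {ρ c Mq : ℝ} (hρ : 0 < ρ)
    (hq : -Mq ≤ (inner ℝ a (x₁ + (-(ρ/‖v‖)) • v) : ℝ) + b)
    (hx₁ : (inner ℝ a x₁ : ℝ) + b ≤ c) :
    (inner ℝ a (x₁ + v) : ℝ) + b ≤ c + (c + Mq) * (‖v‖/ρ) := by
  have hvn : (0:ℝ) < ‖v‖ := norm_pos_iff.2 hv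
  have hvne : ‖v‖ ≠ 0 := ne_of_gt hvn
  have hρne : ρ ≠ 0 := ne_of_gt hρ
  set ia : ℝ := inner ℝ a v with hia
  have hexq : (inner ℝ a (x₁ + (-(ρ/‖v‖)) • v) : ℝ) + b
      = ((inner ℝ a x₁ : ℝ) + b) - (ρ/‖v‖) * ia := by
    rw [inner_add_right, real_inner_smul_right]
    ring
  rw [hexq] at hq
  have hexζ : (inner ℝ a (x₁ + v) : ℝ) + b = ((inner ℝ a x₁ : ℝ) + b) + ia := by
    rw [inner_add_right, ← hia]
    ring
  rw [hexζ]
  have hs : (0:ℝ) < ρ/‖v‖ := div_pos hρ hvn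
  have h1 : (ρ/‖v‖) * ia ≤ c + Mq := by linarith
  have h2 : ia ≤ (c + Mq) * (‖v‖/ρ) := by
    have h3 : ia ≤ (c + Mq) / (ρ/‖v‖) := by
      rw [le_div_iff₀ hs]
      linarith [mul_comm ia (ρ/‖v‖)]
    have h4 : (c + Mq) / (ρ/‖v‖) = (c + Mq) * (‖v‖/ρ) := by
      rw [div_div_eq_mul_div, mul_div_assoc]
    linarith [h4 ▸ h3]
  linarith

/-- Core transfer: a point `ζ` certified at base `x`, with direction `ζ - x₁` in the span,
is uniformly controlled for representatives based at `x₁`. -/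
lemma transfer_point {Ψ : ℕ → E → ℝ} (hconv : ∀ n, ConvexOn ℝ univ (Ψ n)) {x x₁ : E}
    {ρ εK MK : ℝ} (hρ : 0 < ρ) (hεK : 0 < εK) (hMK : 0 ≤ MK)
    (hBB : ∀ w ∈ vectorSpan ℝ (Ib Ψ x), ‖w‖ ≤ ρ →
      ∀ n, ∀ g ∈ reps Ψ n x εK, g (x₁ + w) ≤ MK)
    {ζ : E} {εζ Mζ : ℝ} (hεζ : 0 < εζ)
    (hMζ : ∀ n, ∀ g ∈ reps Ψ n x εζ, g ζ ≤ Mζ)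
    (hdir : ζ - x₁ ∈ vectorSpan ℝ (Ib Ψ x)) {ε₁ : ℝ} (hε₁ : 0 < ε₁) :
    ∀ n, ∀ g ∈ reps Ψ n x₁ ε₁, g ζ ≤ (max Mζ 0) + ε₁ + (ε₁ + MK) * (‖ζ - x₁‖/ρ) := by
  intro n g hg
  have hgc := reps_convexOn_s4 hconv hg
  have hgnn := reps_nonneg hg
  have hgx₁ : g x₁ < ε₁ := reps_lt hg
  by_cases hv : ζ - x₁ = 0
  · have hζx : ζ = x₁ := by
      have := sub_eq_zero.1 hv
      exact this
    rw [hv, hζx]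
    simp only [norm_zero, zero_div, mul_zero, add_zero]
    have : (0:ℝ) ≤ max Mζ 0 := le_max_right _ _
    linarith
  · set v := ζ - x₁ with hvdef
    have hvn : (0:ℝ) < ‖v‖ := norm_pos_iff.2 hv
    set η := min εK εζ with hη
    have hηpos : 0 < η := lt_min hεK hεζ
    obtain ⟨a, b, hab1, hab2⟩ := exists_affine_minorant_pt hgc x hηpos
    have hB := reps_shift hg hab1 hab2
    have hBζ : g ζ - ((inner ℝ a ζ : ℝ) + b) ≤ Mζ :=
      hMζ n _ (reps_mono (min_le_right _ _) hB)
    set q := x₁ + (-(ρ/‖v‖)) • v with hqdef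
    have hqmem : g q - ((inner ℝ a q : ℝ) + b) ≤ MK := by
      apply hBB ((-(ρ/‖v‖)) • v) (Submodule.smul_mem _ _ hdir) _ n _
        (reps_mono (min_le_left _ _) hB)
      rw [norm_smul, Real.norm_eq_abs, abs_neg, abs_of_pos (div_pos hρ hvn)]
      rw [div_mul_cancel₀ _ (ne_of_gt hvn)]
    have hq : -MK ≤ (inner ℝ a q : ℝ) + b := by
      have := hgnn q
      linarith
    have hlx₁ : (inner ℝ a x₁ : ℝ) + b ≤ g x₁ := hab1 x₁
    have hsc := slope_core hv hρ hq (le_of_lt (lt_of_le_of_lt hlx₁ hgx₁))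
    have hζeq : ζ = x₁ + v := by rw [hvdef]; abel
    have hgζ : g ζ ≤ Mζ + ((inner ℝ a ζ : ℝ) + b) := by linarith
    have hineq : (inner ℝ a ζ : ℝ) + b ≤ ε₁ + (ε₁ + MK) * (‖v‖/ρ) := by
      rw [hζeq]
      exact hsc
    have hMζmax : Mζ ≤ max Mζ 0 := le_max_left _ _
    linarith

/-- First inclusion: `Ib Ψ x ⊆ Ib Ψ x₁` when `x₁` is a radial point of `Ib Ψ x`. -/
lemma Ib_subset_of_radial {Ψ : ℕ → E → ℝ} (hconv : ∀ n, ConvexOn ℝ univ (Ψ n)) {x x₁ : E}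
    (hx₁ : x₁ ∈ Ib Ψ x)
    (hrad : ∀ y ∈ Ib Ψ x, ∃ δ : ℝ, 0 < δ ∧ x₁ + δ • (x₁ - y) ∈ Ib Ψ x) :
    Ib Ψ x ⊆ Ib Ψ x₁ := by
  obtain ⟨ρ, hρ, εK, hεK, MK, hMKnn, hBB⟩ := ball_bound hconv hx₁ hrad
  intro ζ hζA
  obtain ⟨εζ, hεζ, Mζ, hMζ⟩ := id hζA
  have hdir : ζ - x₁ ∈ vectorSpan ℝ (Ib Ψ x) := by
    have := vsub_mem_vectorSpan ℝ hζA hx₁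
    simpa [vsub_eq_sub] using this
  exact ⟨1, one_pos, (max Mζ 0) + 1 + (1 + MK) * (‖ζ - x₁‖/ρ),
    transfer_point hconv hρ hεK hMKnn hBB hεζ hMζ hdir one_pos⟩

/-- Second inclusion: `Ib Ψ x₁ ⊆ Ib Ψ x` when `x₁` is a radial point of `Ib Ψ x`. -/
lemma Ib_superset_of_radial {Ψ : ℕ → E → ℝ} (hconv : ∀ n, ConvexOn ℝ univ (Ψ n)) {x x₁ : E}
    (hx₁ : x₁ ∈ Ib Ψ x)
    (hrad : ∀ y ∈ Ib Ψ x, ∃ δ : ℝ, 0 < δ ∧ x₁ + δ • (x₁ - y) ∈ Ib Ψ x) :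
    Ib Ψ x₁ ⊆ Ib Ψ x := by
  obtain ⟨ρ, hρ, εK, hεK, MK, hMKnn, hBB⟩ := ball_bound hconv hx₁ hrad
  intro ζ hζB
  by_cases hv : ζ - x₁ = 0
  · rw [sub_eq_zero.1 hv]
    exact hx₁
  have hvn : (0:ℝ) < ‖ζ - x₁‖ := norm_pos_iff.2 hv
  -- direction fact via the first-step lemma
  obtain ⟨δ₀, hδ₀pos, hδ₀le, hp⟩ := Ib_first_step hconv hx₁ hζB
  have hdir : ζ - x₁ ∈ vectorSpan ℝ (Ib Ψ x) := by
    have h1 : (x₁ + δ₀ • (ζ - x₁)) - x₁ ∈ vectorSpan ℝ (Ib Ψ x) := by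
      have := vsub_mem_vectorSpan ℝ hp hx₁
      simpa [vsub_eq_sub] using this
    rw [add_sub_cancel_left] at h1
    have h2 := Submodule.smul_mem (vectorSpan ℝ (Ib Ψ x)) δ₀⁻¹ h1
    rwa [inv_smul_smul₀ (ne_of_gt hδ₀pos)] at h2
  -- uniform bound on the ball for representatives based at x₁
  have hBB1 : ∀ w ∈ vectorSpan ℝ (Ib Ψ x), ‖w‖ ≤ ρ →
      ∀ n, ∀ g ∈ reps Ψ n x₁ 1, g (x₁ + w) ≤ MK + 1 + (1 + MK) := by
    intro w hw hwn n g hg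
    have hdir' : (x₁ + w) - x₁ ∈ vectorSpan ℝ (Ib Ψ x) := by
      rwa [add_sub_cancel_left]
    have := transfer_point hconv hρ hεK hMKnn hBB hεK (hBB w hw hwn) hdir' one_pos n g hg
    have hmax : max MK 0 = MK := max_eq_left hMKnn
    rw [hmax] at this
    have hfrac : ‖(x₁ + w) - x₁‖/ρ ≤ 1 := by
      rw [add_sub_cancel_left, div_le_one hρ]
      exact hwn
    have h1MK : (0:ℝ) ≤ 1 + MK := by linarith
    nlinarith [this, mul_le_mul_of_nonneg_left hfrac h1MK]
  -- main computation
  obtain ⟨ε₁c, hε₁c, M₁c, hM₁c⟩ := id hx₁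
  obtain ⟨εζ, hεζ, Mζ, hMζ⟩ := id hζB
  set c := max M₁c 0 with hc
  have hcnn : (0:ℝ) ≤ c := le_max_right _ _
  set M₁s := MK + 1 + (1 + MK) with hM₁s
  refine ⟨min εK ε₁c, lt_min hεK hε₁c, Mζ + c + (c + M₁s) * (‖ζ - x₁‖/ρ),
    fun n g hg => ?_⟩
  have hgc := reps_convexOn_s4 hconv hg
  have hgnn := reps_nonneg hg
  have hgx₁ : g x₁ ≤ M₁c := hM₁c n g (reps_mono (min_le_right _ _) hg)
  set η := min εζ 1 with hη
  have hηpos : 0 < η := lt_min hεζ one_pos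
  obtain ⟨a, b, hab1, hab2⟩ := exists_affine_minorant_pt hgc x₁ hηpos
  have hB := reps_shift hg hab1 hab2
  have hBζ : g ζ - ((inner ℝ a ζ : ℝ) + b) ≤ Mζ :=
    hMζ n _ (reps_mono (min_le_left _ _) hB)
  set v := ζ - x₁ with hvdef
  set q := x₁ + (-(ρ/‖v‖)) • v with hqdef
  have hqmem : g q - ((inner ℝ a q : ℝ) + b) ≤ M₁s := by
    apply hBB1 ((-(ρ/‖v‖)) • v) (Submodule.smul_mem _ _ hdir) _ n _
      (reps_mono (min_le_right _ _) hB)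
    rw [norm_smul, Real.norm_eq_abs, abs_neg, abs_of_pos (div_pos hρ hvn)]
    rw [div_mul_cancel₀ _ (ne_of_gt hvn)]
  have hq : -M₁s ≤ (inner ℝ a q : ℝ) + b := by
    have := hgnn q
    linarith
  have hlx₁ : (inner ℝ a x₁ : ℝ) + b ≤ c := by
    have := hab1 x₁
    have h2 : M₁c ≤ c := le_max_left _ _
    linarith
  have hsc := slope_core hv hρ hq hlx₁
  have hζeq : ζ = x₁ + v := by rw [hvdef]; abel
  have hineq : (inner ℝ a ζ : ℝ) + b ≤ c + (c + M₁s) * (‖v‖/ρ) := by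
    rw [hζeq]
    exact hsc
  linarith

/-- From intrinsic interior membership to the radial property. -/
lemma intrinsicInterior_radial {A : Set E} {x : E} (hx : x ∈ intrinsicInterior ℝ A) :
    x ∈ A ∧ ∀ y ∈ A, ∃ δ : ℝ, 0 < δ ∧ x + δ • (x - y) ∈ A := by
  refine ⟨intrinsicInterior_subset hx, fun y hy => ?_⟩
  have hxA : x ∈ A := intrinsicInterior_subset hx
  obtain ⟨xh, hxhint, hxh⟩ := mem_intrinsicInterior.1 hx
  rw [mem_interior_iff_mem_nhds, Metric.mem_nhds_iff] at hxhint
  obtain ⟨ε, hε, hball⟩ := hxhint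
  set δ := ε / (2 * (‖x - y‖ + 1)) with hδ
  have hδpos : 0 < δ := by positivity
  refine ⟨δ, hδpos, ?_⟩
  have hwspan : x + δ • (x - y) ∈ affineSpan ℝ A := by
    have h1 : δ • (x -ᵥ y) +ᵥ x ∈ affineSpan ℝ A :=
      AffineSubspace.smul_vsub_vadd_mem _ δ (subset_affineSpan ℝ A hxA)
        (subset_affineSpan ℝ A hy) (subset_affineSpan ℝ A hxA)
    have h2 : δ • (x -ᵥ y) +ᵥ x = x + δ • (x - y) := by
      rw [vsub_eq_sub, vadd_eq_add]
      abel
    rwa [h2] at h1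
  have hdist : dist (⟨x + δ • (x - y), hwspan⟩ : affineSpan ℝ A) xh < ε := by
    rw [Subtype.dist_eq, hxh]
    rw [dist_eq_norm]
    have h3 : x + δ • (x - y) - x = δ • (x - y) := by abel
    rw [h3, norm_smul, Real.norm_eq_abs, abs_of_pos hδpos]
    rw [hδ]
    have h4 : ‖x - y‖ < ‖x - y‖ + 1 := by linarith
    have h5 : (0:ℝ) < ‖x - y‖ + 1 := by positivity
    calc ε / (2 * (‖x - y‖ + 1)) * ‖x - y‖ < ε / (2 * (‖x - y‖ + 1)) * (‖x-y‖+1) := by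
          apply mul_lt_mul_of_pos_left h4 (by positivity)
      _ = ε / 2 := by field_simp
      _ < ε := by linarith
  have := hball hdist
  exact this

/-- From the radial property to intrinsic interior membership. -/
lemma radial_mem_intrinsicInterior {A : Set E} (hA : Convex ℝ A) {x : E} (hx : x ∈ A)
    (hrad : ∀ y ∈ A, ∃ δ : ℝ, 0 < δ ∧ x + δ • (x - y) ∈ A) :
    x ∈ intrinsicInterior ℝ A := by
  set V := vectorSpan ℝ A with hV
  set m := Module.finrank ℝ ↥V with hm
  set bV := stdOrthonormalBasis ℝ ↥V with hbV
  have hmove : ∀ j : Fin m, ∃ τ : ℝ, 0 < τ ∧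
      ∀ σ : ℝ, |σ| ≤ τ → x + σ • ((bV j : ↥V) : E) ∈ A := fun j =>
    move_in_span hA hx hrad (SetLike.coe_mem _)
  choose τ hτpos hτmem using hmove
  obtain ⟨r, hrpos, hrτ⟩ := exists_uniform_pos τ hτpos
  have hvert : ∀ (j : Fin m) (σ : ℝ), |σ| ≤ r → x + σ • ((bV j : ↥V) : E) ∈ A :=
    fun j σ hσ => hτmem j σ (le_trans hσ (hrτ j))
  have hball : ∀ v ∈ V, ‖v‖ ≤ r/(m+1) → x + v ∈ A := by
    intro v hvV hvn
    set v' : ↥V := ⟨v, hvV⟩ with hv'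
    set t : Fin m → ℝ := fun j => bV.repr v' j with ht
    have hsum : ∑ j, t j • ((bV j : ↥V) : E) = v := by
      have h1 := bV.sum_repr v'
      calc ∑ j, t j • ((bV j : ↥V) : E) = ((∑ j, t j • bV j : ↥V) : E) := by
            push_cast
            rfl
        _ = ((v' : ↥V) : E) := by rw [h1]
        _ = v := rfl
    have htle : ∀ j, |t j| ≤ r/(m+1) := by
      intro j
      have h1 : t j = (inner ℝ (bV j) v' : ℝ) := bV.repr_apply_apply v' j
      have h2 : |(inner ℝ (bV j) v' : ℝ)| ≤ ‖bV j‖ * ‖v'‖ := abs_real_inner_le_norm _ _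
      have h3 : ‖bV j‖ = 1 := bV.orthonormal.1 j
      have h4 : ‖v'‖ = ‖v‖ := rfl
      rw [h1]
      calc |(inner ℝ (bV j) v' : ℝ)| ≤ ‖bV j‖ * ‖v'‖ := h2
        _ = ‖v‖ := by rw [h3, h4, one_mul]
        _ ≤ r/(m+1) := hvn
    have habs : ∑ j, |t j| ≤ r := by
      calc ∑ j, |t j| ≤ ∑ _j : Fin m, r/(m+1) := Finset.sum_le_sum (fun j _ => htle j)
        _ = m * (r/(m+1)) := by
            rw [Finset.sum_const, Finset.card_univ, Fintype.card_fin, nsmul_eq_mul]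
        _ ≤ r := by
            have hm1 : (0:ℝ) < (m:ℝ) + 1 := by positivity
            rw [mul_div_assoc']
            rw [div_le_iff₀ hm1]
            nlinarith [hrpos, Nat.cast_nonneg (α := ℝ) m]
    have hfin := crossPolytope_mem hA hx (fun j => ((bV j : ↥V) : E)) hrpos hvert t habs
    rwa [hsum] at hfin
  rw [mem_intrinsicInterior]
  refine ⟨⟨x, subset_affineSpan ℝ A hx⟩, ?_, rfl⟩
  rw [mem_interior]
  refine ⟨Metric.ball ⟨x, subset_affineSpan ℝ A hx⟩ (r/(m+1)), ?_, Metric.isOpen_ball,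
    Metric.mem_ball_self (by positivity)⟩
  rintro ⟨w, hwspan⟩ hwball
  have hdist : ‖w - x‖ < r/(m+1) := by
    have := Metric.mem_ball.1 hwball
    rw [Subtype.dist_eq, dist_eq_norm] at this
    exact this
  have hdir : w - x ∈ V := by
    have h1 : w -ᵥ x ∈ (affineSpan ℝ A).direction :=
      AffineSubspace.vsub_mem_direction hwspan (subset_affineSpan ℝ A hx)
    rwa [direction_affineSpan, vsub_eq_sub] at h1
  have := hball (w - x) hdir (le_of_lt hdist)
  have h2 : x + (w - x) = w := by abel
  rw [h2] at this
  exact this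


/-- The Bass paving: for a sequence of nonnegative convex functions `ψ_n`,
if `x₁ ∈ I^B(x)` then `I^B(x) = I^B(x₁)`, and for `x₁ ∉ I^B(x)` the sets `I^B(x)` and
`I^B(x₁)` are disjoint; hence `{I^B(x)}` is a paving of `ℝ^d` into disjoint relatively
open convex sets. -/
theorem IB_paving (Ψ : ℕ → EuclideanSpace ℝ (Fin d) → ℝ)
    (hconv : ∀ n, ConvexOn ℝ Set.univ (Ψ n)) (hpos : ∀ n y, 0 ≤ Ψ n y) :
    (∀ x x₁, x₁ ∈ IB Ψ x → IB Ψ x = IB Ψ x₁) ∧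
    (∀ x x₁, x₁ ∉ IB Ψ x → IB Ψ x ∩ IB Ψ x₁ = ∅) := by
  have main : ∀ x x₁, x₁ ∈ IB Ψ x → Ib Ψ x = Ib Ψ x₁ := by
    intro x x₁ hmem
    obtain ⟨hx₁A, hrad⟩ := intrinsicInterior_radial hmem
    exact Subset.antisymm (Ib_subset_of_radial hconv hx₁A hrad)
      (Ib_superset_of_radial hconv hx₁A hrad)
  have part1 : ∀ x x₁, x₁ ∈ IB Ψ x → IB Ψ x = IB Ψ x₁ := by
    intro x x₁ h
    unfold IB
    rw [main x x₁ h]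
  refine ⟨part1, fun x x₁ hnot => ?_⟩
  by_contra hne
  obtain ⟨w, hw⟩ := nonempty_iff_ne_empty.2 hne
  have h1 := part1 x w hw.1
  have h2 := part1 x₁ w hw.2
  have hx₁self : x₁ ∈ IB Ψ x₁ := by
    apply radial_mem_intrinsicInterior (Ib_convex hconv x₁) (mem_Ib_self Ψ x₁)
    intro y hy
    obtain ⟨δ, hδpos, -, hmem⟩ := Ib_radial hconv hy
    exact ⟨δ, hδpos, hmem⟩
  rw [h2, ← h1] at hx₁self
  exact hnot hx₁self
end
end

section
/- Let (ψ_n) be a sequence of convex functions ℝ^d → (-∞,∞], fix x ∈ ℝ^d, and let I^B(x) be the relatively open convex set of the Bass paving. Choose nonnegative representatives ψ̄_n = ψ_n + aff_n. If the real sequence (ψ̄_n(y₀)) is bounded for some y₀ ∈ I^B(x), then (ψ̄_n(y)) is bounded for every y ∈ I^B(x), and moreover (ψ̄_n) is uniformly bounded on every compact subset of I^B(x). -/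
open MeasureTheory Set

noncomputable section


variable {d : ℕ}

local notation "E" => EuclideanSpace ℝ (Fin d)

/-- Affine functions are convex. -/
lemma affine_convexOn (v : E) (c : ℝ) :
    ConvexOn ℝ Set.univ (fun y : E => (inner ℝ v y : ℝ) + c) := by
  refine ⟨convex_univ, fun y _ z _ p q hp hq hpq => ?_⟩
  have h1 : (inner ℝ v (p • y + q • z) : ℝ) = p * inner ℝ v y + q * inner ℝ v z := by
    rw [inner_add_right, real_inner_smul_right, real_inner_smul_right]
  simp only [smul_eq_mul, h1]
  have : p * c + q * c = c := by rw [← add_mul, hpq, one_mul]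
  linarith

/-- ε-subgradient existence. -/
lemma exists_eps_support (f : E → ℝ) (hf : ConvexOn ℝ Set.univ f)
    (x : E) {ε : ℝ} (hε : 0 < ε) :
    ∃ (v : E) (c : ℝ), (∀ y, (inner ℝ v y : ℝ) + c ≤ f y) ∧ f x - ε < (inner ℝ v x : ℝ) + c := by
  have hcont : Continuous f := hf.locallyLipschitz.continuous
  set S : Set (E × ℝ) := {p | f p.1 < p.2} with hS
  have hSconv : Convex ℝ S := by
    have h := hf.convex_strict_epigraph
    simpa [S] using h
  have hSopen : IsOpen S := isOpen_lt (hcont.comp continuous_fst) continuous_snd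
  have hq : ((x, f x - ε / 2) : E × ℝ) ∉ S := by
    simp only [hS, Set.mem_setOf_eq, not_lt]
    linarith
  obtain ⟨L, hL⟩ := geometric_hahn_banach_point_open hSconv hSopen hq
  set β := L ((0 : E), (1 : ℝ)) with hβ
  have hdec : ∀ (y : E) (t : ℝ), L (y, t) = L (y, 0) + t * β := by
    intro y t
    have h : ((y, t) : E × ℝ) = (y, (0:ℝ)) + t • ((0:E), (1:ℝ)) := by
      simp [Prod.ext_iff]
    rw [h, map_add, L.map_smul, smul_eq_mul]
  have hkey : ∀ y t, f y < t → L (x, 0) + (f x - ε / 2) * β < L (y, 0) + t * β := by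
    intro y t ht
    have h := hL (y, t) ht
    have h2 := hdec x (f x - ε / 2)
    have h3 := hdec y t
    linarith
  have hβpos : 0 < β := by
    have h1 := hkey x (f x + 1) (by linarith)
    nlinarith
  have hβne : β ≠ 0 := ne_of_gt hβpos
  have hle : ∀ y, L (x, 0) + (f x - ε / 2) * β ≤ L (y, 0) + f y * β := by
    intro y
    by_contra h
    push_neg at h
    set δ := (L (x, 0) + (f x - ε / 2) * β - (L (y, 0) + f y * β)) / β with hδdef
    have hδ : 0 < δ := div_pos (by linarith) hβpos
    have h2 := hkey y (f y + δ) (by linarith)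
    have h3 : δ * β = L (x, 0) + (f x - ε / 2) * β - (L (y, 0) + f y * β) := by
      rw [hδdef, div_mul_cancel₀ _ hβne]
    nlinarith
  set v := (InnerProductSpace.toDual ℝ (EuclideanSpace ℝ (Fin d))).symm
      ((-β⁻¹) • (L.comp (ContinuousLinearMap.inl ℝ (EuclideanSpace ℝ (Fin d)) ℝ))) with hv
  have hvy : ∀ y : E, (inner ℝ v y : ℝ) = -β⁻¹ * L (y, 0) := by
    intro y
    rw [hv, InnerProductSpace.toDual_symm_apply]
    simp
  refine ⟨v, β⁻¹ * L (x, 0) + f x - ε / 2, ?_, ?_⟩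
  · intro y
    have h4 : 0 ≤ β⁻¹ * ((L (y, 0) + f y * β) - (L (x, 0) + (f x - ε / 2) * β)) :=
      mul_nonneg (inv_nonneg.2 hβpos.le) (sub_nonneg.2 (hle y))
    have h5 : β⁻¹ * ((L (y, 0) + f y * β) - (L (x, 0) + (f x - ε / 2) * β))
        = (β⁻¹ * L (y, 0) - β⁻¹ * L (x, 0)) + (f y - f x + ε / 2) := by
      field_simp
      ring
    rw [hvy]
    linarith [h4, h5.symm ▸ h4, h5 ▸ h4]
  · rw [hvy]
    linarith [hε]

/-- Segment extension past an intrinsic-interior point. -/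
lemma exists_extension {S : Set E} {y₀ y : E}
    (hy₀ : y₀ ∈ intrinsicInterior ℝ S) (hy : y ∈ S) :
    ∃ s : ℝ, 0 < s ∧ (1 + s) • y₀ - s • y ∈ S := by
  have hy₀S : y₀ ∈ S := intrinsicInterior_subset hy₀
  have hy₀A : y₀ ∈ affineSpan ℝ S := subset_affineSpan ℝ S hy₀S
  have hyA : y ∈ affineSpan ℝ S := subset_affineSpan ℝ S hy
  rw [mem_intrinsicInterior] at hy₀
  obtain ⟨z, hz, hzc⟩ := hy₀
  have hmem : ∀ t : ℝ, t • (y₀ - y) + y₀ ∈ affineSpan ℝ S := fun t =>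
    (affineSpan ℝ S).smul_vsub_vadd_mem t hy₀A hyA hy₀A
  set c : ℝ → (affineSpan ℝ S : Set _) := fun t => ⟨t • (y₀ - y) + y₀, hmem t⟩ with hc
  have hccont : Continuous c := by
    apply Continuous.subtype_mk
    exact (continuous_id.smul continuous_const).add continuous_const
  have hc0 : c 0 = z := by
    apply Subtype.ext
    simp [hc, hzc]
  have hpre : c ⁻¹' (interior ((↑) ⁻¹' S : Set (affineSpan ℝ S))) ∈ nhds (0 : ℝ) :=
    (isOpen_interior.preimage hccont).mem_nhds (by rw [Set.mem_preimage, hc0]; exact hz)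
  obtain ⟨r, hr, hball⟩ := Metric.mem_nhds_iff.1 hpre
  have hmemball : (r / 2 : ℝ) ∈ Metric.ball (0 : ℝ) r := by
    rw [Metric.mem_ball, Real.dist_eq, sub_zero, abs_of_pos (half_pos hr)]
    linarith
  have hcs : c (r / 2) ∈ (↑) ⁻¹' S := interior_subset (hball hmemball)
  refine ⟨r / 2, half_pos hr, ?_⟩
  have : (1 + r / 2) • y₀ - (r / 2) • y = (r / 2) • (y₀ - y) + y₀ := by
    rw [add_smul, one_smul, smul_sub]
    abel
  rw [this]
  exact hcs

/-- Near any intrinsic-interior point, the set of points of the affine span is contained in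
the convex hull of a finite subset of `S`. -/
lemma exists_finset_hull {S : Set E} {k : E} (hk : k ∈ intrinsicInterior ℝ S) :
    ∃ F : Finset E, ↑F ⊆ S ∧ ∃ r > (0:ℝ), ∀ y ∈ Metric.ball k r,
      y ∈ affineSpan ℝ S → y ∈ convexHull ℝ (F : Set E) := by
  classical
  have hkS : k ∈ S := intrinsicInterior_subset hk
  have hkA : k ∈ affineSpan ℝ S := subset_affineSpan ℝ S hkS
  rw [mem_intrinsicInterior] at hk
  obtain ⟨z, hz, hzc⟩ := hk
  obtain ⟨r₀, hr₀, hball₀⟩ := Metric.mem_nhds_iff.1 (mem_interior_iff_mem_nhds.1 hz)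
  set V := (affineSpan ℝ S).direction with hV
  obtain ⟨bb, hbb0, hbbsub⟩ := exists_mem_interior_convexHull_affineBasis
    (s := Metric.ball (0 : V) r₀) (x := (0 : V)) (Metric.ball_mem_nhds _ hr₀)
  obtain ⟨r, hr, hballr⟩ := Metric.mem_nhds_iff.1 (mem_interior_iff_mem_nhds.1 hbb0)
  set F : Finset E := Finset.univ.image (fun i => k + ((bb i : V) : E)) with hF
  have hFS : ↑F ⊆ S := by
    intro p hp
    simp only [hF, Finset.coe_image, Finset.coe_univ, Set.image_univ, Set.mem_range] at hp
    obtain ⟨i, rfl⟩ := hp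
    have h1 : (bb i : V) ∈ Metric.ball (0 : V) r₀ :=
      hbbsub (subset_convexHull ℝ _ (Set.mem_range_self i))
    have hmemA : k + ((bb i : V) : E) ∈ affineSpan ℝ S := by
      have := AffineSubspace.vadd_mem_of_mem_direction (bb i : V).2 hkA
      simpa [add_comm] using this
    have h2 : (⟨k + ((bb i : V) : E), hmemA⟩ : affineSpan ℝ S) ∈ Metric.ball z r₀ := by
      rw [Metric.mem_ball, Subtype.dist_eq, hzc]
      simp only [dist_eq_norm, add_sub_cancel_left]
      simpa [dist_eq_norm] using h1
    exact hball₀ h2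
  refine ⟨F, hFS, r, hr, fun y hyb hyA => ?_⟩
  have hvV : y - k ∈ V := by
    have := AffineSubspace.vsub_mem_direction hyA hkA
    simpa using this
  have hvb : (⟨y - k, hvV⟩ : V) ∈ Metric.ball (0 : V) r := by
    rw [Metric.mem_ball]
    have : dist (⟨y - k, hvV⟩ : V) 0 = ‖y - k‖ := by
      simp [dist_eq_norm]
    rw [this]
    simpa [dist_eq_norm] using hyb
  have hvhull : (⟨y - k, hvV⟩ : V) ∈ convexHull ℝ (Set.range bb) := hballr hvb
  set T : V →ᵃ[ℝ] E := AffineMap.mk (fun w => k + (w : E)) V.subtype (by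
    intro p v
    simp [add_comm, add_assoc, add_left_comm]) with hT
  have himg : T '' convexHull ℝ (Set.range bb) = convexHull ℝ (T '' Set.range bb) :=
    AffineMap.image_convexHull _ _
  have hyT : y = T ⟨y - k, hvV⟩ := by simp [hT]
  have h6 : T '' Set.range bb = ↑F := by
    rw [← Set.range_comp]
    simp [hF, Finset.coe_image, Finset.coe_univ, Set.image_univ, hT]
    rfl
  rw [hyT]
  have := Set.mem_image_of_mem T hvhull
  rw [himg, h6] at this
  exact this


/-- Fix nonnegative representatives `ψ̄_n = ψ_n + aff_n` of a sequence of convex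
functions.  If the sequence `(ψ̄_n(y₀))_n` is bounded for some `y₀ ∈ I^B(x)`, then it is
bounded for every `y ∈ I^B(x)`, and moreover `(ψ̄_n)_n` is uniformly bounded on every
compact subset of `I^B(x)`. -/
theorem IB_bounded_reps (Ψ : ℕ → EuclideanSpace ℝ (Fin d) → ℝ)
    (hconv : ∀ n, ConvexOn ℝ Set.univ (Ψ n))
    (x : EuclideanSpace ℝ (Fin d))
    (ψbar : ℕ → EuclideanSpace ℝ (Fin d) → ℝ)
    (a : ℕ → EuclideanSpace ℝ (Fin d)) (b : ℕ → ℝ)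
    (hrep : ∀ n y, ψbar n y = Ψ n y + (inner ℝ (a n) y + b n))
    (hnonneg : ∀ n y, 0 ≤ ψbar n y)
    (y₀ : EuclideanSpace ℝ (Fin d)) (hy₀ : y₀ ∈ IB Ψ x)
    (hbdd : ∃ M : ℝ, ∀ n, ψbar n y₀ ≤ M) :
    (∀ y ∈ IB Ψ x, ∃ M : ℝ, ∀ n, ψbar n y ≤ M) ∧
    (∀ K : Set (EuclideanSpace ℝ (Fin d)), K ⊆ IB Ψ x → IsCompact K →
      ∃ M : ℝ, ∀ n, ∀ y ∈ K, ψbar n y ≤ M) := by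
  classical
  have hψconv : ∀ n, ConvexOn ℝ Set.univ (ψbar n) := by
    intro n
    have h : ψbar n = fun y => Ψ n y + ((inner ℝ (a n) y : ℝ) + b n) := funext (hrep n)
    rw [h]
    exact (hconv n).add (affine_convexOn _ _)
  -- existence of representatives in `reps Ψ n x ε`
  have hrepex : ∀ n, ∀ ε > (0:ℝ), ∃ (v : E) (c : ℝ),
      (fun y => ψbar n y - ((inner ℝ v y : ℝ) + c)) ∈ reps Ψ n x ε ∧
      (∀ y, (inner ℝ v y : ℝ) + c ≤ ψbar n y) := by
    intro n ε hε
    obtain ⟨v, c, hm, hmx⟩ := exists_eps_support (ψbar n) (hψconv n) x hε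
    refine ⟨v, c, ⟨a n - v, b n - c, ?_, ?_, ?_⟩, hm⟩
    · intro y
      show ψbar n y - ((inner ℝ v y : ℝ) + c) = _
      rw [hrep n y, inner_sub_left]
      ring
    · intro y
      show 0 ≤ ψbar n y - ((inner ℝ v y : ℝ) + c)
      linarith [hm y]
    · show ψbar n x - ((inner ℝ v x : ℝ) + c) < ε
      linarith
  -- pointwise bounds on all of `Ib`
  have P1 : ∀ y ∈ Ib Ψ x, ∃ M : ℝ, ∀ n, ψbar n y ≤ M := by
    intro y hy
    obtain ⟨M₀, hM₀⟩ := hbdd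
    obtain ⟨s, hs, hzS⟩ := exists_extension hy₀ hy
    obtain ⟨εy, hεy, My, hMy⟩ := hy
    set z : E := (1 + s) • y₀ - s • y with hzdef
    obtain ⟨εz, hεz, Mz, hMz⟩ := hzS
    set ε := min εy εz with hεdef
    have hε : 0 < ε := lt_min hεy hεz
    refine ⟨My + ((1 + s) * M₀ + Mz) / s, fun n => ?_⟩
    obtain ⟨v, c, hg, hm⟩ := hrepex n ε hε
    obtain ⟨a', b', hge, hgn, hgx⟩ := hg
    have hgy : ψbar n y - ((inner ℝ v y : ℝ) + c) ≤ My :=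
      hMy n _ ⟨a', b', hge, hgn, hgx.trans_le (min_le_left _ _)⟩
    have hgz : ψbar n z - ((inner ℝ v z : ℝ) + c) ≤ Mz :=
      hMz n _ ⟨a', b', hge, hgn, hgx.trans_le (min_le_right _ _)⟩
    have key : (1 + s) * ((inner ℝ v y₀ : ℝ) + c)
        = ((inner ℝ v z : ℝ) + c) + s * ((inner ℝ v y : ℝ) + c) := by
      rw [hzdef, inner_sub_right, real_inner_smul_right, real_inner_smul_right]
      ring
    have h1 : (inner ℝ v y₀ : ℝ) + c ≤ M₀ := (hm y₀).trans (hM₀ n)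
    have h2 : -Mz ≤ (inner ℝ v z : ℝ) + c := by
      have := hnonneg n z
      linarith
    have h4 : s * ((inner ℝ v y : ℝ) + c) ≤ (1 + s) * M₀ + Mz := by
      have h5 : (1 + s) * ((inner ℝ v y₀ : ℝ) + c) ≤ (1 + s) * M₀ :=
        mul_le_mul_of_nonneg_left h1 (by linarith)
      linarith
    have h6 : (inner ℝ v y : ℝ) + c ≤ ((1 + s) * M₀ + Mz) / s := by
      rw [le_div_iff₀ hs]
      linarith [h4]
    linarith
  -- choice of pointwise bound function
  set B : E → ℝ := fun y => if h : ∃ M : ℝ, ∀ n, ψbar n y ≤ M then h.choose else 0 with hB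
  have hBspec : ∀ y ∈ Ib Ψ x, ∀ n, ψbar n y ≤ B y := by
    intro y hy n
    have h := P1 y hy
    rw [hB]
    simp only [dif_pos h]
    exact h.choose_spec n
  constructor
  · exact fun y hy => P1 y (intrinsicInterior_subset hy)
  · intro K hK hKc
    rcases K.eq_empty_or_nonempty with rfl | hKne
    · exact ⟨0, by simp⟩
    have hQ : ∀ k ∈ K, ∃ F : Finset E, ↑F ⊆ Ib Ψ x ∧ ∃ r > (0:ℝ),
        ∀ y ∈ Metric.ball k r, y ∈ affineSpan ℝ (Ib Ψ x) → y ∈ convexHull ℝ (F : Set E) :=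
      fun k hk => exists_finset_hull (hK hk)
    choose! F hFsub r hrpos hincl using hQ
    obtain ⟨t, htK, hcover⟩ := hKc.elim_nhds_subcover (fun k => Metric.ball k (r k))
      (fun k hk => Metric.ball_mem_nhds _ (hrpos k hk))
    set G : Finset E := t.biUnion F with hG
    have hGIb : ↑G ⊆ Ib Ψ x := by
      intro p hp
      rw [hG, Finset.coe_biUnion] at hp
      simp only [Set.mem_iUnion, Finset.mem_coe] at hp
      obtain ⟨k, hk, hpk⟩ := hp
      exact hFsub k (htK k hk) hpk
    have hyhull : ∀ y ∈ K, y ∈ convexHull ℝ (G : Set E) := by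
      intro y hy
      obtain ⟨k, hk, hyk⟩ := Set.mem_iUnion₂.1 (hcover hy)
      have hyA : y ∈ affineSpan ℝ (Ib Ψ x) :=
        subset_affineSpan ℝ _ (intrinsicInterior_subset (hK hy))
      have := hincl k (htK k hk) y hyk hyA
      refine convexHull_mono ?_ this
      intro p hp
      simp only [hG, Finset.coe_biUnion, Set.mem_iUnion, Finset.mem_coe]
      exact ⟨k, hk, hp⟩
    have hGne : G.Nonempty := by
      obtain ⟨y, hy⟩ := hKne
      have := hyhull y hy
      rcases G.eq_empty_or_nonempty with h | h
      · rw [h] at this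
        simp at this
      · exact h
    refine ⟨G.sup' hGne B, fun n y hy => ?_⟩
    obtain ⟨p, hp, hle⟩ := (hψconv n).exists_ge_of_mem_convexHull
      (Set.subset_univ (G : Set E)) (hyhull y hy)
    calc ψbar n y ≤ ψbar n p := hle
      _ ≤ B p := hBspec p (hGIb hp) n
      _ ≤ G.sup' hGne B := Finset.le_sup' B hp
end
end

section
/- Let C ⊆ ℝ^d be a convex set, x a relative boundary point of C, and x̄ ∈ ri C with |x - x̄| = 1. Suppose ψ : ℝ^d → ℝ is convex, ψ ≥ 0, ψ(x) < ε for some ε ∈ (0,1), and ψ(x + ε²(x - x̄)) - ψ(x) ≥ 1. Then there exists an affine function aff : ℝ^d → ℝ with aff ≤ ψ on ℝ^d, aff(x) = -ε, and ψ(x̄) - aff(x̄) ≥ 1/ε. -/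
open MeasureTheory Set

noncomputable section

set_option maxHeartbeats 1000000 in
/-- Key geometric lemma: let `C ⊆ ℝ^d` be convex, `x` a relative boundary point of `C`,
`x̄ ∈ ri C` with `‖x - x̄‖ = 1`.  If `ψ` is convex, nonnegative, `ψ(x) < ε` for some
`ε ∈ (0,1)` and `ψ(x + ε²(x - x̄)) - ψ(x) ≥ 1`, then there exists an affine function
`aff ≤ ψ` on `ℝ^d` with `aff(x) = -ε` and `ψ(x̄) - aff(x̄) ≥ 1/ε`. -/
theorem exists_affine_minorant_boundary {d : ℕ}
    (C : Set (EuclideanSpace ℝ (Fin d))) (hC : Convex ℝ C)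
    (x xb : EuclideanSpace ℝ (Fin d))
    (hx : x ∈ closure C \ intrinsicInterior ℝ C)
    (hxb : xb ∈ intrinsicInterior ℝ C)
    (hdist : ‖x - xb‖ = 1)
    (ψ : EuclideanSpace ℝ (Fin d) → ℝ) (hψ : ConvexOn ℝ Set.univ ψ)
    (hψ0 : ∀ z, 0 ≤ ψ z) (ε : ℝ) (hε : ε ∈ Set.Ioo (0 : ℝ) 1)
    (hψx : ψ x < ε)
    (hgrow : 1 ≤ ψ (x + ε ^ 2 • (x - xb)) - ψ x) :
    ∃ (a : EuclideanSpace ℝ (Fin d)) (b : ℝ),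
      (∀ z, inner ℝ a z + b ≤ ψ z) ∧
      (inner ℝ a x + b = -ε) ∧
      (1 / ε ≤ ψ xb - (inner ℝ a xb + b)) := by
  classical
  obtain ⟨hε0, hε1⟩ := hε
  set u : EuclideanSpace ℝ (Fin d) := x - xb with hu
  -- continuity of ψ
  have hcont : Continuous ψ := by
    have h := hψ.continuousOn isOpen_univ
    rw [← continuousOn_univ]
    exact h
  -- key one-dimensional bound
  have key : ∀ t : ℝ, t / ε - ε ≤ ψ (x + t • u) := by
    intro t
    rcases le_or_gt t (ε ^ 2) with ht | ht
    · have h1 : t / ε ≤ ε := by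
        rw [div_le_iff₀ hε0]
        nlinarith
      have := hψ0 (x + t • u)
      linarith
    · -- t > ε², use convexity
      have htpos : (0:ℝ) < t := lt_trans (by positivity) ht
      set a : ℝ := 1 - ε ^ 2 / t with ha
      set b : ℝ := ε ^ 2 / t with hb
      have hb0 : 0 ≤ b := by positivity
      have ha0 : 0 ≤ a := by
        have : ε ^ 2 / t ≤ 1 := by
          rw [div_le_one htpos]; linarith
        simp [ha]; linarith
      have hab : a + b = 1 := by simp [ha, hb]
      have hcomb : a • x + b • (x + t • u) = x + ε ^ 2 • u := by
        have hbt : b * t = ε ^ 2 := by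
          rw [hb, div_mul_cancel₀ _ htpos.ne']
        rw [smul_add, ← add_assoc, ← add_smul, hab, one_smul, smul_smul, hbt]
      have hconv := hψ.2 (mem_univ x) (mem_univ (x + t • u)) ha0 hb0 hab
      rw [hcomb] at hconv
      rw [smul_eq_mul, smul_eq_mul] at hconv
      have hg : 1 ≤ ψ (x + ε ^ 2 • u) - ψ x := hgrow
      have hq0 : 0 ≤ ψ (x + t • u) := hψ0 _
      have hx0 : 0 ≤ ψ x := hψ0 _
      -- from hconv : ψ (x + ε²u) ≤ a ψ x + b ψ q
      -- so b * ψ q ≥ ψ(x+ε²u) - a ψ x ≥ 1 + b ψ x ≥ 1, hence ψ q ≥ t/ε² ≥ t/ε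
      have h1 : 1 ≤ b * ψ (x + t • u) := by
        nlinarith [mul_nonneg hb0 hx0]
      have h2 : t / ε ^ 2 ≤ ψ (x + t • u) := by
        rw [div_le_iff₀ (by positivity)]
        have hmul := mul_le_mul_of_nonneg_right h1 htpos.le
        have hbt : b * t = ε ^ 2 := by rw [hb, div_mul_cancel₀ _ htpos.ne']
        nlinarith
      have h3 : t / ε ≤ t / ε ^ 2 := by
        rw [div_le_div_iff₀ hε0 (by positivity)]
        nlinarith [mul_pos (mul_pos htpos hε0) (show (0:ℝ) < 1 - ε by linarith)]
      linarith
  -- the epigraph and the line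
  set S : Set (EuclideanSpace ℝ (Fin d) × ℝ) :=
    {p | p.1 ∈ Set.univ ∧ ψ p.1 ≤ p.2} with hS
  set A : Set (EuclideanSpace ℝ (Fin d) × ℝ) := {p | ψ p.1 < p.2} with hA
  have hAopen : IsOpen A := isOpen_lt (hcont.comp continuous_fst) continuous_snd
  have hAeq : A = interior S := by
    apply Subset.antisymm
    · exact interior_maximal (fun p hp => ⟨mem_univ _, le_of_lt hp⟩) hAopen
    · intro p hp
      obtain ⟨δ, hδ0, hball⟩ := Metric.isOpen_iff.mp isOpen_interior p hp
      have hd2 : dist (p.2 - δ/2) p.2 = δ/2 := by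
        rw [Real.dist_eq]
        have : p.2 - δ/2 - p.2 = -(δ/2) := by ring
        rw [this, abs_neg, abs_of_pos (by linarith)]
      have hmem : ((p.1, p.2 - δ/2) : EuclideanSpace ℝ (Fin d) × ℝ) ∈ S := by
        apply interior_subset
        apply hball
        rw [Metric.mem_ball, Prod.dist_eq]
        simp only [dist_self, hd2]
        rw [max_eq_right (by linarith)]
        linarith
      have h2 := hmem.2
      simp only [hA, mem_setOf_eq]
      simp only at h2
      linarith
  have hAconv : Convex ℝ A := by
    rw [hAeq]; exact hψ.convex_epigraph.interior
  -- line set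
  set L : Set (EuclideanSpace ℝ (Fin d) × ℝ) :=
    Set.range (fun t : ℝ => ((x + t • u, t / ε - ε) : EuclideanSpace ℝ (Fin d) × ℝ)) with hL
  have hLconv : Convex ℝ L := by
    intro p hp q hq a b ha0 hb0 hab
    obtain ⟨s, rfl⟩ := hp
    obtain ⟨t, rfl⟩ := hq
    refine ⟨a * s + b * t, ?_⟩
    have h1 : x + (a * s + b * t) • u = a • (x + s • u) + b • (x + t • u) := by
      rw [smul_add, smul_add, add_add_add_comm, ← add_smul, hab, one_smul,
        smul_smul, smul_smul, ← add_smul]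
    have h2 : (a * s + b * t) / ε - ε = a * (s / ε - ε) + b * (t / ε - ε) := by
      field_simp
      linear_combination ε ^ 2 * hab
    simp only [Prod.smul_def, Prod.mk_add_mk, smul_eq_mul]
    exact Prod.ext h1 h2
  have hdisj : Disjoint A L := by
    rw [Set.disjoint_left]
    rintro p hpA ⟨t, rfl⟩
    exact absurd (key t) (not_le.mpr hpA)
  obtain ⟨f, s, hfA, hfL⟩ := geometric_hahn_banach_open hAconv hAopen hLconv hdisj
  -- decompose f
  set G : EuclideanSpace ℝ (Fin d) →L[ℝ] ℝ :=
    f.comp (ContinuousLinearMap.inl ℝ (EuclideanSpace ℝ (Fin d)) ℝ) with hG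
  set c : ℝ := f (0, 1) with hc
  have hf : ∀ (z : EuclideanSpace ℝ (Fin d)) (r : ℝ), f (z, r) = G z + r * c := by
    intro z r
    have hzr : ((z, r) : EuclideanSpace ℝ (Fin d) × ℝ) = (z, 0) + r • ((0 : EuclideanSpace ℝ (Fin d)), (1:ℝ)) := by
      simp [Prod.ext_iff]
    rw [hzr, map_add, f.map_smul]
    simp [hG, hc, smul_eq_mul, ContinuousLinearMap.comp_apply]
  have hlt : ∀ (z : EuclideanSpace ℝ (Fin d)) (r : ℝ), ψ z < r → G z + r * c < s := by
    intro z r h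
    have := hfA (z, r) h
    rwa [hf] at this
  have hge : ∀ t : ℝ, s ≤ G (x + t • u) + (t / ε - ε) * c := by
    intro t
    have := hfL (x + t • u, t / ε - ε) ⟨t, rfl⟩
    rwa [hf] at this
  -- c < 0
  have hcneg : c < 0 := by
    by_contra hcge
    push_neg at hcge
    have h1 := hge 0
    simp only [zero_smul, add_zero, zero_div, zero_sub] at h1
    have h2 := hlt x (ψ x + 1) (by linarith)
    nlinarith [hψ0 x]
  -- affine minorant: aff z := (s - G z)/c ≤ ψ z
  have haff : ∀ z, (s - G z) / c ≤ ψ z := by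
    intro z
    refine le_of_forall_pos_lt_add fun δ hδ => ?_
    have := hlt z (ψ z + δ) (by linarith)
    rw [div_lt_iff_of_neg hcneg]
    nlinarith
  have hline : ∀ t : ℝ, t / ε - ε ≤ (s - G (x + t • u)) / c := by
    intro t
    rw [le_div_iff_of_neg hcneg]
    have := hge t
    nlinarith
  -- slope computation
  have hGline : ∀ t : ℝ, G (x + t • u) = G x + t * G u := by
    intro t
    rw [G.map_add, G.map_smul, smul_eq_mul]
  set α : ℝ := (s - G x) / c with hα
  set β : ℝ := -(G u / c) with hβdef
  have hlineval : ∀ t : ℝ, (s - G (x + t • u)) / c = α + t * β := by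
    intro t
    rw [hGline, hα, hβdef]
    field_simp
    ring
  have hline' : ∀ t : ℝ, t / ε - ε ≤ α + t * β := by
    intro t; rw [← hlineval]; exact hline t
  have hβ : β = 1 / ε := by
    by_contra hne
    set m : ℝ := 1 / ε - β with hm
    have hm0 : m ≠ 0 := by
      simp only [hm]
      intro h
      apply hne
      linarith
    have hgen : ∀ t : ℝ, m * t ≤ α + ε := by
      intro t
      have h := hline' t
      have hmt : m * t = t / ε - t * β := by
        rw [hm]
        field_simp
      rw [hmt]
      linarith
    have := hgen ((α + ε + 1) / m)
    rw [mul_div_cancel₀ _ hm0] at this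
    linarith
  have hα_ge : -ε ≤ α := by
    have := hline' 0
    simpa using this
  -- construct a and b
  set φ : StrongDual ℝ (EuclideanSpace ℝ (Fin d)) := (-c)⁻¹ • G with hφ
  set a : EuclideanSpace ℝ (Fin d) := (InnerProductSpace.toDual ℝ _).symm φ with haa
  set b : ℝ := s / c - α - ε with hbb
  have hinner : ∀ z, (inner ℝ a z : ℝ) = (-c)⁻¹ * G z := by
    intro z
    rw [haa, InnerProductSpace.toDual_symm_apply]
    simp [hφ, smul_eq_mul]
  have hval : ∀ z, (inner ℝ a z : ℝ) + b = (s - G z) / c - α - ε + 0 := by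
    intro z
    rw [hinner, hbb]
    have h1 : (-c)⁻¹ * G z = - (G z / c) := by
      rw [← div_eq_inv_mul, div_neg]
    rw [h1, sub_div]
    ring
  refine ⟨a, b, ?_, ?_, ?_⟩
  · intro z
    rw [hval]
    have h1 := haff z
    linarith
  · rw [hval, ← hα]
    ring
  · rw [hval]
    have h1 : G xb = G x - G u := by
      have : xb = x + (-1 : ℝ) • u := by
        simp [hu]
      rw [this, G.map_add, G.map_smul]
      simp
      ring
    rw [h1]
    have h2 : (s - (G x - G u)) / c = α + (-1) * β := by
      rw [hα, hβdef]; field_simp; ring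
    rw [h2, hβ]
    have hψxb := hψ0 xb
    have h3 : (0:ℝ) < 1/ε := by positivity
    linarith
end
end

section
/- Let f_n : ℝ^d → [0,∞] be lower semicontinuous convex functions, π a probability measure on ℝ^d × ℝ^d with disintegration π(dx,dy) = π_x(dy) μ(dx) such that ∫ y π_x(dy) = x μ-a.s., K a measurable set with μ(K) > 0, H an open half space, and suppose: (i) sup_n ∫∫ (f_n(y) − f_n(x)) π_x(dy) μ(dx) = a < ∞; (ii) sup_n sup_{x∈K} f_n(x) = m < ∞; (iii) f_n(y) → ∞ for every y ∈ H; (iv) c := ∫_K π_x(H) μ(dx) > 0 and the barycenter ỹ of the normalized measure (1/c)∫_K π_x|_H(·) μ(dx) lies in H. Then a ≥ c·sup_n f_n(ỹ) − m·μ(K) = +∞, a contradiction. Hence under (i)–(ii), if f_n → ∞ pointwise on an open half space H disjoint from K's paving cell, then ∫_K π_x(H) μ(dx) = 0. -/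
open MeasureTheory Set Filter
open scoped ENNReal

noncomputable section

/-- Core estimate for `supp(ν) ⊆ C^B`: let `π_x` be a martingale kernel over `μ`, let
`f_n ≥ 0` be lower semicontinuous convex functions with
(i) `sup_n ∫∫ (f_n(y) - f_n(x)) π_x(dy) μ(dx) ≤ a < ∞` and
(ii) `f_n ≤ m` uniformly on a measurable set `K` with `μ(K) > 0`.
If `f_n → ∞` pointwise on an open half space `H`, then `∫_K π_x(H) μ(dx) = 0`. -/
theorem halfspace_mass_vanishes {d : ℕ}
    (μ : Measure (EuclideanSpace ℝ (Fin d))) [IsProbabilityMeasure μ]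
    (π : EuclideanSpace ℝ (Fin d) → Measure (EuclideanSpace ℝ (Fin d)))
    (hπprob : ∀ x, IsProbabilityMeasure (π x)) (hπmeas : Measurable π)
    (hmart : ∀ᵐ x ∂μ, Integrable (fun y => y) (π x) ∧ (∫ y, y ∂(π x)) = x)
    (f : ℕ → EuclideanSpace ℝ (Fin d) → ℝ)
    (hfconv : ∀ n, ConvexOn ℝ Set.univ (f n))
    (hflsc : ∀ n, LowerSemicontinuous (f n))
    (hfmeas : ∀ n, Measurable (f n))
    (hfpos : ∀ n y, 0 ≤ f n y)
    (hI1 : ∀ n, ∀ᵐ x ∂μ, Integrable (f n) (π x))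
    (hI2 : ∀ n, Integrable (fun x => ∫ y, (f n y - f n x) ∂(π x)) μ)
    (a : ℝ) (ha : ∀ n, ∫ x, (∫ y, (f n y - f n x) ∂(π x)) ∂μ ≤ a)
    (K : Set (EuclideanSpace ℝ (Fin d))) (hKmeas : MeasurableSet K) (hK : 0 < μ K)
    (m : ℝ) (hm : ∀ n, ∀ x ∈ K, f n x ≤ m)
    (H : Set (EuclideanSpace ℝ (Fin d))) (u : EuclideanSpace ℝ (Fin d)) (c : ℝ)
    (hu : ‖u‖ = 1) (hH : H = {y | c < inner ℝ u y})
    (htend : ∀ y ∈ H, Tendsto (fun n => f n y) atTop atTop) :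
    ∫⁻ x in K, (π x) H ∂μ = 0 := by
  have hHmeas : MeasurableSet H := by
    rw [hH]
    exact measurableSet_lt measurable_const
      (Continuous.measurable (continuous_const.inner continuous_id))
  -- m ≥ 0
  have hKne : K.Nonempty := nonempty_of_measure_ne_zero hK.ne'
  obtain ⟨x₀, hx₀⟩ := hKne
  have hm0 : 0 ≤ m := le_trans (hfpos 0 x₀) (hm 0 x₀ hx₀)
  -- the main sequence of lintegrals
  set F : ℕ → EuclideanSpace ℝ (Fin d) → ℝ≥0∞ :=
    fun n x => ∫⁻ y in H, ENNReal.ofReal (f n y) ∂(π x) with hF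
  have hFmeas : ∀ n, Measurable (F n) := by
    intro n
    have h1 : Measurable (H.indicator fun y => ENNReal.ofReal (f n y)) :=
      ((ENNReal.measurable_ofReal.comp (hfmeas n))).indicator hHmeas
    have : F n = fun x => ∫⁻ y, H.indicator (fun y => ENNReal.ofReal (f n y)) y ∂(π x) := by
      funext x
      rw [lintegral_indicator hHmeas]
    rw [this]
    exact (Measure.measurable_lintegral h1).comp hπmeas
  -- auxiliary: φ n
  set φ : ℕ → EuclideanSpace ℝ (Fin d) → ℝ :=
    fun n x => ∫ y, (f n y - f n x) ∂(π x) with hφ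
  -- a.e. facts: φ n x ≥ 0 and F n x ≤ ofReal (φ n x + f n x)
  have hae : ∀ n, ∀ᵐ x ∂μ, 0 ≤ φ n x ∧ F n x ≤ ENNReal.ofReal (φ n x + f n x) := by
    intro n
    filter_upwards [hmart, hI1 n] with x ⟨hint_id, hbar⟩ hint_f
    have := hπprob x
    have hsub : φ n x = (∫ y, f n y ∂(π x)) - f n x := by
      rw [hφ]
      simp only
      rw [integral_sub hint_f (integrable_const _), integral_const]
      simp [measure_univ]
    -- Jensen
    have hjen : f n x ≤ ∫ y, f n y ∂(π x) := by
      have := (hfconv n).map_integral_le ((hfconv n).continuousOn isOpen_univ)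
        isClosed_univ (Filter.Eventually.of_forall fun y => mem_univ y) hint_id
        (by exact hint_f)
      simpa [hbar] using this
    constructor
    · rw [hsub]; linarith
    · have h1 : F n x ≤ ∫⁻ y, ENNReal.ofReal (f n y) ∂(π x) :=
        setLIntegral_le_lintegral _ _
      have h2 : (∫⁻ y, ENNReal.ofReal (f n y) ∂(π x))
          = ENNReal.ofReal (∫ y, f n y ∂(π x)) :=
        (ofReal_integral_eq_lintegral_ofReal hint_f
          (Filter.Eventually.of_forall fun y => hfpos n y)).symm
      rw [show φ n x + f n x = ∫ y, f n y ∂(π x) by rw [hsub]; ring]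
      exact h1.trans h2.le
  -- uniform bound
  have hbound : ∀ n, ∫⁻ x in K, F n x ∂μ
      ≤ ENNReal.ofReal (a + m * (μ K).toReal) := by
    intro n
    have haeK : ∀ᵐ x ∂(μ.restrict K), F n x ≤ ENNReal.ofReal (φ n x + m) := by
      have h1 : ∀ᵐ x ∂(μ.restrict K),
          0 ≤ φ n x ∧ F n x ≤ ENNReal.ofReal (φ n x + f n x) :=
        ae_restrict_of_ae (hae n)
      have h2 : ∀ᵐ x ∂(μ.restrict K), x ∈ K := ae_restrict_mem hKmeas
      filter_upwards [h1, h2] with x ⟨_, hx2⟩ hxK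
      exact hx2.trans (ENNReal.ofReal_le_ofReal (by linarith [hm n x hxK]))
    calc ∫⁻ x in K, F n x ∂μ
        ≤ ∫⁻ x in K, ENNReal.ofReal (φ n x + m) ∂μ := lintegral_mono_ae haeK
      _ = ENNReal.ofReal (∫ x in K, (φ n x + m) ∂μ) := by
          refine (ofReal_integral_eq_lintegral_ofReal ?_ ?_).symm
          · exact ((hI2 n).restrict).add (integrable_const m)
          · refine ae_restrict_of_ae ?_
            filter_upwards [hae n] with x ⟨hx1, _⟩
            simp only [Pi.zero_apply]
            linarith
      _ ≤ ENNReal.ofReal (a + m * (μ K).toReal) := by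
          apply ENNReal.ofReal_le_ofReal
          rw [integral_add ((hI2 n).restrict) (integrable_const m), integral_const]
          have h3 : ∫ x in K, φ n x ∂μ ≤ ∫ x, φ n x ∂μ := by
            refine setIntegral_le_integral (hI2 n) ?_
            filter_upwards [hae n] with x ⟨hx1, _⟩ using hx1
          have h4 := ha n
          simp only [smul_eq_mul, Measure.restrict_apply_univ]
          rw [mul_comm]
          exact add_le_add (h3.trans h4) (le_of_eq (by simp [Measure.real]))
  set B := ENNReal.ofReal (a + m * (μ K).toReal) with hB
  -- Fatou, inner
  have hinner : ∀ x, (⊤ : ℝ≥0∞) * (π x) H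
      ≤ liminf (fun n => F n x) atTop := by
    intro x
    have h0 : ∀ y ∈ H, (⊤ : ℝ≥0∞) ≤ liminf (fun n => ENNReal.ofReal (f n y)) atTop := by
      intro y hy
      have : Tendsto (fun n => ENNReal.ofReal (f n y)) atTop (nhds ⊤) :=
        ENNReal.tendsto_ofReal_atTop.comp (htend y hy)
      rw [this.liminf_eq]
    calc (⊤ : ℝ≥0∞) * (π x) H = ∫⁻ _ in H, ⊤ ∂(π x) := (setLIntegral_const H ⊤).symm
      _ ≤ ∫⁻ y in H, liminf (fun n => ENNReal.ofReal (f n y)) atTop ∂(π x) := by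
          refine setLIntegral_mono ?_ h0
          exact .liminf fun n => ENNReal.measurable_ofReal.comp (hfmeas n)
      _ ≤ liminf (fun n => F n x) atTop :=
          lintegral_liminf_le fun n => ENNReal.measurable_ofReal.comp (hfmeas n)
  -- combine
  have hπHmeas : Measurable fun x => (π x) H := (Measure.measurable_coe hHmeas).comp hπmeas
  have hmain : (⊤ : ℝ≥0∞) * ∫⁻ x in K, (π x) H ∂μ ≤ B := by
    calc (⊤ : ℝ≥0∞) * ∫⁻ x in K, (π x) H ∂μ
        = ∫⁻ x in K, ⊤ * (π x) H ∂μ := (lintegral_const_mul ⊤ hπHmeas).symm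
      _ ≤ ∫⁻ x in K, liminf (fun n => F n x) atTop ∂μ :=
          lintegral_mono fun x => hinner x
      _ ≤ liminf (fun n => ∫⁻ x in K, F n x ∂μ) atTop :=
          lintegral_liminf_le hFmeas
      _ ≤ B := liminf_le_of_frequently_le
          (Filter.Frequently.of_forall fun n => hbound n)
  by_contra hne
  rw [ENNReal.top_mul hne] at hmain
  exact (lt_irrefl ⊤ (lt_of_le_of_lt hmain ENNReal.ofReal_lt_top)).elim
end
end
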